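/- arXiv:2201.09412 — 7 statements merged into one kernel-verified Lean document; each statement's English description precedes it below -/
import Mathlib

section
/- For a finite chain complex with exterior derivatives d_k and Dirac blocks D_k = d_k^* d_k, the k-th Hodge block L_k = d_k^* d_k + d_{k-1} d_{k-1}^* satisfies Det(L_k) = Det(D_k) · Det(D_{k-1}'), where D_{k-1}' = d_{k-1} d_{k-1}^* and Det denotes the pseudo determinant (product of nonzero eigenvalues). -/
open Matrix

/-- The pseudo determinant of a real square matrix: the product of its nonzero
eigenvalues, computed (for the diagonalizable/symmetric matrices considered here)
as `(-1)^rank` times the lowest-order nonzero coefficient of the characteristic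
polynomial.  For the zero matrix it equals `1`. -/
noncomputable def pseudoDet {V : Type*} [Fintype V] [DecidableEq V]
    (A : Matrix V V ℝ) : ℝ :=
  (-1 : ℝ) ^ A.rank * A.charpoly.coeff (Fintype.card V - A.rank)

open Polynomial

private lemma charpoly_conj_aux {n : Type*} [Fintype n] [DecidableEq n]
    (P M Q : Matrix n n ℝ) (h : P * Q = 1) :
    (P * M * Q).charpoly = M.charpoly := by
  have h' : (C : ℝ →+* ℝ[X]).mapMatrix P * (C : ℝ →+* ℝ[X]).mapMatrix Q = 1 := by
    rw [← _root_.map_mul, h, _root_.map_one]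
  have key : charmatrix (P * M * Q) =
      (C : ℝ →+* ℝ[X]).mapMatrix P * charmatrix M * (C : ℝ →+* ℝ[X]).mapMatrix Q := by
    simp only [charmatrix, mul_sub, sub_mul, _root_.map_mul]
    congr 1
    rw [mul_assoc, scalar_commute (X : ℝ[X]) (fun r => Commute.all _ _) _, ← mul_assoc, h',
      one_mul]
  have h'' : (C : ℝ →+* ℝ[X]).mapMatrix Q * (C : ℝ →+* ℝ[X]).mapMatrix P = 1 :=
    mul_eq_one_comm.mp h'
  rw [Matrix.charpoly, key, det_mul, det_mul, mul_comm, ← mul_assoc, ← det_mul, h'', det_one,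
    one_mul]
  rfl

private lemma herm_charpoly_eq_prod {n : Type*} [Fintype n] [DecidableEq n]
    {A : Matrix n n ℝ} (hA : A.IsHermitian) :
    A.charpoly = ∏ i, (X - C (hA.eigenvalues i)) := by
  classical
  have hU : (hA.eigenvectorUnitary : Matrix n n ℝ) *
      star (hA.eigenvectorUnitary : Matrix n n ℝ) = 1 :=
    (Matrix.mem_unitaryGroup_iff).mp hA.eigenvectorUnitary.2
  have h1 : A.charpoly = (Matrix.diagonal hA.eigenvalues).charpoly := by
    conv_lhs => rw [hA.spectral_theorem]
    rw [show (RCLike.ofReal ∘ hA.eigenvalues : n → ℝ) = hA.eigenvalues by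
      ext i; simp [RCLike.ofReal_real_eq_id]]
    exact charpoly_conj_aux _ _ _ hU
  rw [h1]
  have h2 : charmatrix (Matrix.diagonal hA.eigenvalues) =
      Matrix.diagonal (fun i => X - C (hA.eigenvalues i)) := by
    ext i j
    by_cases hij : i = j
    · subst hij; simp
    · simp [charmatrix_apply_ne _ _ _ hij, Matrix.diagonal_apply_ne _ hij]
  rw [Matrix.charpoly, h2, det_diagonal]

private lemma herm_charpoly_factor {n : Type*} [Fintype n] [DecidableEq n]
    {A : Matrix n n ℝ} (hA : A.IsHermitian) :
    ∃ q : ℝ[X], A.charpoly = X ^ (Fintype.card n - A.rank) * q ∧ q.coeff 0 ≠ 0 := by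
  classical
  refine ⟨∏ i ∈ Finset.univ.filter (fun i => hA.eigenvalues i ≠ 0), (X - C (hA.eigenvalues i)),
    ?_, ?_⟩
  · rw [herm_charpoly_eq_prod hA,
      ← Finset.prod_filter_mul_prod_filter_not Finset.univ (fun i => hA.eigenvalues i = 0)]
    have hz : ∏ i ∈ Finset.univ.filter (fun i => hA.eigenvalues i = 0),
        (X - C (hA.eigenvalues i)) = X ^ (Fintype.card n - A.rank) := by
      rw [Finset.prod_congr rfl (fun i hi => ?_), Finset.prod_const]
      · congr 1
        have hr : A.rank = (Finset.univ.filter (fun i => hA.eigenvalues i ≠ 0)).card := by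
          rw [hA.rank_eq_card_non_zero_eigs, Fintype.card_subtype]
        have hsum := Finset.card_filter_add_card_filter_not
          (s := (Finset.univ : Finset n)) (p := fun i => hA.eigenvalues i = 0)
        simp only [Finset.card_univ] at hsum
        have : (Finset.univ.filter (fun i => ¬hA.eigenvalues i = 0)).card =
            (Finset.univ.filter (fun i => hA.eigenvalues i ≠ 0)).card := rfl
        omega
      · simp only [Finset.mem_filter] at hi
        rw [hi.2, map_zero, sub_zero]
    rw [hz]
  · rw [coeff_zero_eq_eval_zero, eval_prod]
    refine Finset.prod_ne_zero_iff.mpr (fun i hi => ?_)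
    simp only [Finset.mem_filter] at hi
    simp [hi.2]

private lemma charpoly_mul_charpoly {n : Type*} [Fintype n] [DecidableEq n]
    (A B : Matrix n n ℝ) (h : A * B = 0) :
    A.charpoly * B.charpoly = X ^ (Fintype.card n) * (A + B).charpoly := by
  have h0 : (C : ℝ →+* ℝ[X]).mapMatrix A * (C : ℝ →+* ℝ[X]).mapMatrix B = 0 := by
    rw [← _root_.map_mul, h, _root_.map_zero]
  have key : charmatrix A * charmatrix B = (X : ℝ[X]) • charmatrix (A + B) := by
    simp only [charmatrix, _root_.map_add]
    rw [mul_sub, sub_mul, sub_mul, h0, sub_zero]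
    simp only [scalar_apply, ← Matrix.smul_eq_diagonal_mul, ← Matrix.op_smul_eq_mul_diagonal,
      op_smul_eq_smul]
    rw [smul_sub]
    module
  rw [Matrix.charpoly, Matrix.charpoly, Matrix.charpoly, ← det_mul, key, det_smul,
    Fintype.card]

private lemma pseudoDet_add_of_herm {n : Type*} [Fintype n] [DecidableEq n]
    {A B : Matrix n n ℝ}
    (hA : A.IsHermitian) (hB : B.IsHermitian) (hAB : A * B = 0) :
    pseudoDet (A + B) = pseudoDet A * pseudoDet B := by
  classical
  obtain ⟨qA, hqA, hqA0⟩ := herm_charpoly_factor hA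
  obtain ⟨qB, hqB, hqB0⟩ := herm_charpoly_factor hB
  obtain ⟨qS, hqS, hqS0⟩ := herm_charpoly_factor (hA.add hB)
  have hqA' : qA ≠ 0 := fun h => hqA0 (by simp [h])
  have hqB' : qB ≠ 0 := fun h => hqB0 (by simp [h])
  have hqS' : qS ≠ 0 := fun h => hqS0 (by simp [h])
  have hid := charpoly_mul_charpoly A B hAB
  rw [hqA, hqB, hqS] at hid
  have hid2 : X ^ ((Fintype.card n - A.rank) + (Fintype.card n - B.rank)) * (qA * qB)
      = X ^ (Fintype.card n + (Fintype.card n - (A + B).rank)) * qS := by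
    rw [pow_add, pow_add]; linear_combination hid
  have hntdAB : (qA * qB).natTrailingDegree = 0 :=
    Nat.le_zero.mp (natTrailingDegree_le_of_ne_zero
      (by rw [mul_coeff_zero]; exact mul_ne_zero hqA0 hqB0))
  have hntdS : qS.natTrailingDegree = 0 :=
    Nat.le_zero.mp (natTrailingDegree_le_of_ne_zero hqS0)
  have hexp : (Fintype.card n - A.rank) + (Fintype.card n - B.rank)
      = Fintype.card n + (Fintype.card n - (A + B).rank) := by
    have := congrArg Polynomial.natTrailingDegree hid2
    rwa [natTrailingDegree_mul (pow_ne_zero _ X_ne_zero) (mul_ne_zero hqA' hqB'),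
      natTrailingDegree_mul (pow_ne_zero _ X_ne_zero) hqS',
      natTrailingDegree_X_pow, natTrailingDegree_X_pow, hntdAB, hntdS,
      add_zero, add_zero] at this
  have hrA : A.rank ≤ Fintype.card n := A.rank_le_card_width
  have hrB : B.rank ≤ Fintype.card n := B.rank_le_card_width
  have hrS : (A + B).rank ≤ Fintype.card n := (A + B).rank_le_card_width
  have hrank : (A + B).rank = A.rank + B.rank := by omega
  have hq : qS = qA * qB := by
    rw [hexp] at hid2
    exact (mul_left_cancel₀ (pow_ne_zero _ X_ne_zero) hid2).symm
  have hcoeff : ∀ (q : ℝ[X]) (r : ℕ),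
      (X ^ (Fintype.card n - r) * q).coeff (Fintype.card n - r) = q.coeff 0 := fun q r => by
    simpa using Polynomial.coeff_X_pow_mul q (Fintype.card n - r) 0
  simp only [pseudoDet, hqA, hqB, hqS]
  rw [hcoeff qS, hcoeff qA, hcoeff qB, hq, mul_coeff_zero, hrank, pow_add]
  ring

/-- For consecutive exterior derivatives `dprev : ℝ^c → ℝ^a` and
`dcur : ℝ^a → ℝ^b` of a chain complex (so `dcur * dprev = 0`), the Hodge block
`L = dcurᵀ * dcur + dprev * dprevᵀ` satisfies
`Det(L) = Det(dcurᵀ dcur) * Det(dprev dprevᵀ)`. -/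
theorem hodge_block_pseudoDet_eq_mul {a b c : ℕ}
    (dcur : Matrix (Fin b) (Fin a) ℝ) (dprev : Matrix (Fin a) (Fin c) ℝ)
    (hcomplex : dcur * dprev = 0) :
    pseudoDet (dcurᵀ * dcur + dprev * dprevᵀ) =
      pseudoDet (dcurᵀ * dcur) * pseudoDet (dprev * dprevᵀ) := by
  have hA : (dcurᵀ * dcur).IsHermitian := by
    have := isHermitian_conjTranspose_mul_self dcur
    rwa [conjTranspose_eq_transpose_of_trivial] at this
  have hB : (dprev * dprevᵀ).IsHermitian := by
    have := isHermitian_mul_conjTranspose_self dprev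
    rwa [conjTranspose_eq_transpose_of_trivial] at this
  have hAB : (dcurᵀ * dcur) * (dprev * dprevᵀ) = 0 := by
    rw [Matrix.mul_assoc, ← Matrix.mul_assoc dcur, hcomplex, Matrix.zero_mul, Matrix.mul_zero]
  exact pseudoDet_add_of_herm hA hB hAB
end

section
/- For any finite chain complex (matrices d_k with d_{k+1} d_k = 0), the super pseudo determinant of the Hodge Laplacian is 1: the alternating product ∏_k Det(L_k)^{(-1)^{k+1}} = 1, where L_k = d_k^* d_k + d_{k-1} d_{k-1}^*. -/
open Matrix

namespace MSAux

open Polynomial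

/-! ### Polynomial helpers: trailing data at `0` -/

lemma spec {p u : Polynomial ℝ} {a : ℕ}
    (hp : p = X ^ a * u) (hu : u.eval 0 ≠ 0) :
    p.rootMultiplicity 0 = a ∧ p.coeff (p.rootMultiplicity 0) = u.eval 0 := by
  have hu0 : u ≠ 0 := fun h => hu (by simp [h])
  have hpne : p ≠ 0 := by
    rw [hp]; exact mul_ne_zero (pow_ne_zero _ X_ne_zero) hu0
  have hrm : p.rootMultiplicity 0 = a := by
    rw [hp, rootMultiplicity_mul (hp ▸ hpne)]
    have h1 : rootMultiplicity 0 (X ^ a : Polynomial ℝ) = a := by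
      simpa using rootMultiplicity_X_sub_C_pow (0 : ℝ) a
    have h2 : rootMultiplicity 0 u = 0 :=
      rootMultiplicity_eq_zero (by simpa [IsRoot] using hu)
    omega
  refine ⟨hrm, ?_⟩
  rw [hrm, hp]
  have := coeff_X_pow_mul u a 0
  simpa [coeff_zero_eq_eval_zero] using this

lemma exists_fac {p : Polynomial ℝ} (hp : p ≠ 0) :
    ∃ u : Polynomial ℝ, p = X ^ (p.rootMultiplicity 0) * u ∧ u.eval 0 ≠ 0 := by
  refine ⟨p /ₘ (X - C 0) ^ rootMultiplicity 0 p, ?_, ?_⟩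
  · have := pow_mul_divByMonic_rootMultiplicity_eq p 0
    simpa using this.symm
  · simpa using eval_divByMonic_pow_rootMultiplicity_ne_zero (0:ℝ) hp

/-- Trailing coefficient at 0. -/
noncomputable def T (p : Polynomial ℝ) : ℝ := p.coeff (p.rootMultiplicity 0)

lemma T_mul {p q : Polynomial ℝ} (hp : p ≠ 0) (hq : q ≠ 0) :
    T (p * q) = T p * T q := by
  obtain ⟨u, hu, hu0⟩ := exists_fac hp
  obtain ⟨v, hv, hv0⟩ := exists_fac hq
  set a := p.rootMultiplicity 0 with ha
  set b := q.rootMultiplicity 0 with hb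
  have hpq : p * q = X ^ (a + b) * (u * v) := by
    rw [hu, hv]; ring
  have huv : (u * v).eval 0 ≠ 0 := by
    rw [eval_mul]; exact mul_ne_zero hu0 hv0
  have h1 := (spec hpq huv).2
  have h2 := (spec hu hu0).2
  have h3 := (spec hv hv0).2
  rw [T, T, T, h1, h2, h3, eval_mul]

lemma T_X_pow_mul {p : Polynomial ℝ} (hp : p ≠ 0) (e : ℕ) :
    T (X ^ e * p) = T p := by
  obtain ⟨u, hu, hu0⟩ := exists_fac hp
  set a := p.rootMultiplicity 0 with ha
  have hq : X ^ e * p = X ^ (e + a) * u := by rw [hu]; ring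
  rw [T, T, (spec hq hu0).2, (spec hu hu0).2]

lemma T_ne_zero {p : Polynomial ℝ} (hp : p ≠ 0) : T p ≠ 0 := by
  obtain ⟨u, hu, hu0⟩ := exists_fac hp
  rw [T, (spec hu hu0).2]; exact hu0

lemma T_X_pow (e : ℕ) : T ((X : Polynomial ℝ) ^ e) = 1 := by
  have h : (X : Polynomial ℝ) ^ e = X ^ e * 1 := by ring
  have h1 : (1 : Polynomial ℝ).eval 0 ≠ 0 := by simp
  rw [T, (spec h h1).2]; simp

lemma rm_X_pow_mul {p : Polynomial ℝ} (hp : p ≠ 0) (e : ℕ) :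
    (X ^ e * p).rootMultiplicity 0 = e + p.rootMultiplicity 0 := by
  obtain ⟨u, hu, hu0⟩ := exists_fac hp
  set a := p.rootMultiplicity 0 with ha
  have hq : X ^ e * p = X ^ (e + a) * u := by rw [hu]; ring
  exact (spec hq hu0).1

lemma rm_mul {p q : Polynomial ℝ} (hp : p ≠ 0) (hq : q ≠ 0) :
    (p * q).rootMultiplicity 0 = p.rootMultiplicity 0 + q.rootMultiplicity 0 :=
  rootMultiplicity_mul (mul_ne_zero hp hq)

/-! ### Matrix helpers -/

variable {n : Type} [Fintype n] [DecidableEq n]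

lemma charmatrix_eq (A : Matrix n n ℝ) :
    charmatrix A = (X : ℝ[X]) • (1 : Matrix n n ℝ[X]) - A.map C := by
  ext i j
  by_cases hij : i = j
  · subst hij; simp
  · simp [charmatrix_apply_ne _ _ _ hij, Matrix.one_apply_ne hij]

lemma charpoly_conj (U V D : Matrix n n ℝ) (h1 : U * V = 1) (h2 : V * U = 1) :
    (U * D * V).charpoly = D.charpoly := by
  have hmap : ∀ P Q : Matrix n n ℝ, (P * Q).map (C : ℝ →+* ℝ[X]) = P.map C * Q.map C :=
    fun P Q => Matrix.map_mul
  have key : charmatrix (U * D * V) = U.map C * charmatrix D * V.map C := by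
    rw [charmatrix_eq, charmatrix_eq]
    have h1' : U.map (C : ℝ →+* ℝ[X]) * V.map C = 1 := by
      rw [← hmap, h1]; ext i j; by_cases hij : i = j <;> simp [hij, Matrix.one_apply]
    rw [Matrix.mul_sub, Matrix.sub_mul, hmap, hmap]
    rw [Matrix.mul_smul, Matrix.mul_one, Matrix.smul_mul, h1']
  unfold Matrix.charpoly
  rw [key, det_mul, det_mul, mul_comm, ← mul_assoc, ← det_mul, ← hmap, h2]
  simp

lemma charpoly_diag (v : n → ℝ) :
    (Matrix.diagonal v).charpoly = ∏ i, (X - C (v i)) := by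
  have : charmatrix (Matrix.diagonal v) = Matrix.diagonal (fun i => (X : ℝ[X]) - C (v i)) := by
    ext i j
    by_cases hij : i = j
    · subst hij; simp
    · simp [charmatrix_apply_ne _ _ _ hij, Matrix.diagonal_apply_ne _ hij]
  rw [Matrix.charpoly, this, det_diagonal]

lemma charpoly_herm (A : Matrix n n ℝ) (hA : A.IsHermitian) :
    A.charpoly = ∏ i, (X - C (hA.eigenvalues i)) := by
  have hst := hA.spectral_theorem
  have hU1 : (hA.eigenvectorUnitary : Matrix n n ℝ) *
      (star hA.eigenvectorUnitary : Matrix n n ℝ) = 1 := by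
    simpa using (Matrix.mem_unitaryGroup_iff.mp hA.eigenvectorUnitary.2)
  have hU2 : (star hA.eigenvectorUnitary : Matrix n n ℝ) *
      (hA.eigenvectorUnitary : Matrix n n ℝ) = 1 := by
    simpa using (Matrix.mem_unitaryGroup_iff'.mp hA.eigenvectorUnitary.2)
  have hdiag : (RCLike.ofReal ∘ hA.eigenvalues : n → ℝ) = hA.eigenvalues := by
    ext i; simp
  calc A.charpoly
      = ((hA.eigenvectorUnitary : Matrix n n ℝ) * Matrix.diagonal hA.eigenvalues *
          (star hA.eigenvectorUnitary : Matrix n n ℝ)).charpoly := by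
        rw [← hdiag]; exact congrArg _ (by rw [← Unitary.conjStarAlgAut_apply (S := ℝ), ← hst])
    _ = (Matrix.diagonal hA.eigenvalues).charpoly := charpoly_conj _ _ _ hU1 hU2
    _ = ∏ i, (X - C (hA.eigenvalues i)) := charpoly_diag _

lemma rank_charpoly (A : Matrix n n ℝ) (hA : A.IsHermitian) :
    A.charpoly.rootMultiplicity 0 = Fintype.card n - A.rank ∧ A.rank ≤ Fintype.card n := by
  classical
  have hchar := charpoly_herm A hA
  set v := hA.eigenvalues with hv
  have hsplit : A.charpoly = X ^ (Finset.univ.filter (fun i => v i = 0)).card *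
      ∏ i ∈ Finset.univ.filter (fun i => ¬ v i = 0), (X - C (v i)) := by
    rw [hchar, ← Finset.prod_filter_mul_prod_filter_not Finset.univ (fun i => v i = 0)]
    congr 1
    rw [Finset.prod_congr rfl (fun i hi => ?_), Finset.prod_const]
    · rw [(Finset.mem_filter.mp hi).2]; simp
  have heval : (∏ i ∈ Finset.univ.filter (fun i => ¬ v i = 0), (X - C (v i))).eval 0 ≠ 0 := by
    rw [eval_prod]
    refine Finset.prod_ne_zero_iff.mpr (fun i hi => ?_)
    simpa using (Finset.mem_filter.mp hi).2
  obtain ⟨hrm, _⟩ := spec hsplit heval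
  have hrank : A.rank = (Finset.univ.filter (fun i => ¬ v i = 0)).card := by
    rw [hA.rank_eq_card_non_zero_eigs, Fintype.card_subtype]
  have hcard := Finset.card_filter_add_card_filter_not
    (s := (Finset.univ : Finset n)) (p := fun i => v i = 0)
  simp only [Finset.card_univ] at hcard
  constructor <;> omega

lemma charpoly_add (A B : Matrix n n ℝ) (h : A * B = 0) :
    A.charpoly * B.charpoly = X ^ (Fintype.card n) * (A + B).charpoly := by
  have hmap : A.map (C : ℝ →+* ℝ[X]) * B.map C = 0 := by
    rw [← Matrix.map_mul, h]
    exact Matrix.map_zero _ (map_zero C)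
  have key : charmatrix A * charmatrix B = (X : ℝ[X]) • charmatrix (A + B) := by
    rw [charmatrix_eq, charmatrix_eq, charmatrix_eq]
    rw [Matrix.sub_mul, Matrix.mul_sub, Matrix.mul_sub]
    rw [Matrix.smul_mul, Matrix.smul_mul, Matrix.one_mul, Matrix.mul_smul, Matrix.mul_one, hmap]
    rw [Matrix.map_add _ (map_add C), Matrix.one_mul, smul_sub, smul_add, sub_zero]
    abel
  rw [Matrix.charpoly, Matrix.charpoly, ← det_mul, key, det_smul, ← Matrix.charpoly]

lemma charpoly_rect {m n : Type} [Fintype m] [DecidableEq m] [Fintype n] [DecidableEq n]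
    (M : Matrix m n ℝ) :
    X ^ (Fintype.card m) * (Mᵀ * M).charpoly = X ^ (Fintype.card n) * (M * Mᵀ).charpoly := by
  classical
  set K := FractionRing (Polynomial ℝ)
  set φ : Polynomial ℝ →+* K := algebraMap (Polynomial ℝ) K with hφ
  have hinj : Function.Injective φ := IsFractionRing.injective (Polynomial ℝ) K
  set ψ : ℝ →+* K := φ.comp (C : ℝ →+* Polynomial ℝ) with hψ
  set x : K := φ X with hx
  have hxne : x ≠ 0 := fun h => X_ne_zero (hinj (by simpa using h))
  have hmapchar : ∀ {p : Type} [Fintype p] [DecidableEq p] (A : Matrix p p ℝ),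
      φ A.charpoly = Matrix.det (x • (1 : Matrix p p K) - A.map ψ) := by
    intro p _ _ A
    rw [Matrix.charpoly, RingHom.map_det]
    congr 1
    ext i j
    by_cases hij : i = j
    · subst hij; simp [ψ, x, Matrix.one_apply]
    · simp [charmatrix_apply_ne _ _ _ hij, Matrix.one_apply_ne hij, ψ]
  set M₁ : Matrix m n K := M.map ψ with hM1
  have hM1t : (Mᵀ).map ψ = M₁ᵀ := rfl
  have hMtM : (Mᵀ * M).map ψ = M₁ᵀ * M₁ := by rw [Matrix.map_mul, hM1t]
  have hMMt : (M * Mᵀ).map ψ = M₁ * M₁ᵀ := by rw [Matrix.map_mul, hM1t]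
  set N : Matrix (m ⊕ n) (m ⊕ n) K := fromBlocks (x • 1) M₁ M₁ᵀ 1 with hN
  letI : Invertible (x • (1 : Matrix m m K)) :=
    ⟨x⁻¹ • 1, by rw [smul_mul_smul_comm, inv_mul_cancel₀ hxne, Matrix.one_mul, one_smul],
      by rw [smul_mul_smul_comm, mul_inv_cancel₀ hxne, Matrix.one_mul, one_smul]⟩
  have hinv : (⅟ (x • (1 : Matrix m m K))) = x⁻¹ • 1 := rfl
  have hdet2 : N.det = Matrix.det (x • (1 : Matrix m m K) - M₁ * M₁ᵀ) := by
    letI : Invertible (1 : Matrix n n K) := invertibleOne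
    rw [hN, Matrix.det_fromBlocks₂₂]
    simp
  have hdet1 : N.det = x ^ (Fintype.card m) *
      Matrix.det ((1 : Matrix n n K) - x⁻¹ • (M₁ᵀ * M₁)) := by
    rw [hN, Matrix.det_fromBlocks₁₁, hinv]
    congr 1
    · rw [Matrix.det_smul, Matrix.det_one, mul_one]
    · congr 1
      rw [Matrix.mul_smul, Matrix.mul_one, Matrix.smul_mul]
  have hfac : Matrix.det (x • (1 : Matrix n n K) - M₁ᵀ * M₁) =
      x ^ (Fintype.card n) * Matrix.det ((1 : Matrix n n K) - x⁻¹ • (M₁ᵀ * M₁)) := by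
    rw [← Matrix.det_smul]
    congr 1
    rw [smul_sub, smul_smul, mul_inv_cancel₀ hxne, one_smul]
  apply hinj
  have e1 := hmapchar (p := n) (Mᵀ * M)
  have e2 := hmapchar (p := m) (M * Mᵀ)
  rw [_root_.map_mul, _root_.map_mul, map_pow, map_pow, e1, e2, hMtM, hMMt, ← hx]
  rw [hfac, ← mul_assoc, ← pow_add, Nat.add_comm, pow_add, mul_assoc, ← hdet1, hdet2]

lemma conjT_eq (M : Matrix n n ℝ) : Mᴴ = Mᵀ := by
  ext i j; simp [Matrix.conjTranspose_apply]

lemma herm_tmul {m : Type} [Fintype m] (M : Matrix m n ℝ) : (Mᵀ * M).IsHermitian := by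
  rw [Matrix.IsHermitian, conjT_eq, Matrix.transpose_mul, Matrix.transpose_transpose]

end MSAux

open Polynomial MSAux

/-- McKean–Singer: for a finite chain complex given by matrices
`d k : ℝ^{f k} → ℝ^{f (k+1)}` with `d (k+1) * d k = 0` and `d k = 0` for `k ≥ r`,
the super pseudo determinant of the Hodge Laplacian is `1`:
`∏_{k=0}^{r} Det(L k)^{(-1)^{k+1}} = 1`, where `L 0 = d₀ᵀ d₀` and
`L (k+1) = d_{k+1}ᵀ d_{k+1} + d_k d_kᵀ`. -/
theorem mcKeanSinger_superdet_eq_one (r : ℕ) (f : ℕ → ℕ)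
    (d : ∀ k : ℕ, Matrix (Fin (f (k + 1))) (Fin (f k)) ℝ)
    (hcomplex : ∀ k, d (k + 1) * d k = 0)
    (hfin : ∀ k, r ≤ k → d k = 0)
    (L : ∀ k : ℕ, Matrix (Fin (f k)) (Fin (f k)) ℝ)
    (hL0 : L 0 = (d 0)ᵀ * d 0)
    (hLsucc : ∀ k, L (k + 1) = (d (k + 1))ᵀ * d (k + 1) + d k * (d k)ᵀ) :
    ∏ k ∈ Finset.range (r + 1), pseudoDet (L k) ^ ((-1 : ℤ) ^ (k + 1)) = 1 := by
  classical
  set q : ℕ → Polynomial ℝ := fun k => ((d k)ᵀ * d k).charpoly with hq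
  set q' : ℕ → Polynomial ℝ := fun k => (d k * (d k)ᵀ).charpoly with hq'
  set a : ℕ → ℕ := fun k => (d k).rank with ha
  -- nonvanishing
  have hqne : ∀ k, q k ≠ 0 := fun k => (Matrix.charpoly_monic _).ne_zero
  have hq'ne : ∀ k, q' k ≠ 0 := fun k => (Matrix.charpoly_monic _).ne_zero
  have hLne : ∀ k, (L k).charpoly ≠ 0 := fun k => (Matrix.charpoly_monic _).ne_zero
  -- Hermitian facts
  have hhermB : ∀ k, ((d k)ᵀ * d k).IsHermitian := fun k => herm_tmul (d k)
  have hhermC : ∀ k, (d k * (d k)ᵀ).IsHermitian := fun k => by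
    have := herm_tmul ((d k)ᵀ)
    rwa [Matrix.transpose_transpose] at this
  have hhermL : ∀ k, (L k).IsHermitian := by
    intro k
    match k with
    | 0 => rw [hL0]; exact hhermB 0
    | (k+1) => rw [hLsucc k]; exact (hhermB (k+1)).add (hhermC k)
  -- root multiplicities of q, q'
  have hrmq : ∀ k, (q k).rootMultiplicity 0 = f k - a k ∧ a k ≤ f k := by
    intro k
    have := rank_charpoly _ (hhermB k)
    rwa [Matrix.rank_transpose_mul_self, Fintype.card_fin] at this
  have hrmq' : ∀ k, (q' k).rootMultiplicity 0 = f (k + 1) - a k ∧ a k ≤ f (k + 1) := by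
    intro k
    have := rank_charpoly _ (hhermC k)
    rwa [Matrix.rank_self_mul_transpose, Fintype.card_fin] at this
  -- T (q' k) = T (q k)
  have hTq' : ∀ k, T (q' k) = T (q k) := by
    intro k
    have hrect := charpoly_rect (d k)
    rw [Fintype.card_fin, Fintype.card_fin] at hrect
    have h1 : T (X ^ (f (k + 1)) * q k) = T (q k) := T_X_pow_mul (hqne k) _
    have h2 : T (X ^ (f k) * q' k) = T (q' k) := T_X_pow_mul (hq'ne k) _
    rw [← h1, ← h2, hrect]
  -- pseudoDet via trailing coefficient
  have hPD : ∀ k, pseudoDet (L k) =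
      (-1 : ℝ) ^ (L k).rank * T ((L k).charpoly) := by
    intro k
    obtain ⟨h1, h2⟩ := rank_charpoly _ (hhermL k)
    rw [Fintype.card_fin] at h1
    rw [pseudoDet, T, Fintype.card_fin, h1]
  -- the key product identity in degree k+1
  have hkey : ∀ k, q (k + 1) * q' k = X ^ (f (k + 1)) * (L (k + 1)).charpoly := by
    intro k
    have hzero : ((d (k + 1))ᵀ * d (k + 1)) * (d k * (d k)ᵀ) = 0 := by
      calc ((d (k + 1))ᵀ * d (k + 1)) * (d k * (d k)ᵀ)
          = (d (k + 1))ᵀ * (d (k + 1) * d k) * (d k)ᵀ := by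
            rw [Matrix.mul_assoc, Matrix.mul_assoc, Matrix.mul_assoc]
        _ = 0 := by rw [hcomplex k]; simp
    have := charpoly_add _ _ hzero
    rw [Fintype.card_fin] at this
    rw [← hLsucc k] at this
    exact this
  -- rank of L
  have hrankL0 : (L 0).rank = a 0 := by
    rw [hL0, Matrix.rank_transpose_mul_self]
  have hTL0 : T ((L 0).charpoly) = T (q 0) := by rw [hL0]
  have hrankLs : ∀ k, (L (k + 1)).rank = a (k + 1) + a k := by
    intro k
    obtain ⟨h1, h2⟩ := rank_charpoly _ (hhermL (k + 1))
    rw [Fintype.card_fin] at h1 h2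
    have hrm : (q (k + 1)).rootMultiplicity 0 + (q' k).rootMultiplicity 0 =
        f (k + 1) + ((L (k + 1)).charpoly).rootMultiplicity 0 := by
      rw [← rm_mul (hqne (k + 1)) (hq'ne k), hkey k,
        rm_X_pow_mul (hLne (k + 1)) _]
    obtain ⟨hq1, hq1le⟩ := hrmq (k + 1)
    obtain ⟨hq2, hq2le⟩ := hrmq' k
    omega
  have hTLs : ∀ k, T ((L (k + 1)).charpoly) = T (q (k + 1)) * T (q k) := by
    intro k
    have := congrArg T (hkey k)
    rw [T_mul (hqne (k + 1)) (hq'ne k), T_X_pow_mul (hLne (k + 1)) _] at this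
    rw [← this, hTq' k]
  -- the telescoping sequence
  set s : ℕ → ℝ := fun k => (-1 : ℝ) ^ (a k) * T (q k) with hs
  have hsne : ∀ k, s k ≠ 0 := by
    intro k
    exact mul_ne_zero (pow_ne_zero _ (by norm_num)) (T_ne_zero (hqne k))
  have hP0 : pseudoDet (L 0) = s 0 := by
    rw [hPD 0, hrankL0, hTL0]
  have hPs : ∀ k, pseudoDet (L (k + 1)) = s (k + 1) * s k := by
    intro k
    rw [hPD (k + 1), hrankLs k, hTLs k, hs]
    simp only [pow_add]
    ring
  -- induction
  have key : ∀ K, ∏ k ∈ Finset.range (K + 1), pseudoDet (L k) ^ ((-1 : ℤ) ^ (k + 1)) =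
      (s K) ^ ((-1 : ℤ) ^ (K + 1)) := by
    intro K
    induction K with
    | zero => rw [Finset.prod_range_one, hP0]
    | succ K ih =>
      have cancel : ∀ (x y : ℝ) (e : ℤ), x ≠ 0 → x ^ e * (y * x) ^ (-e) = y ^ (-e) := by
        intro x y e hx
        rw [mul_zpow, ← mul_assoc, mul_comm (x ^ e) (y ^ (-e)), mul_assoc,
          ← zpow_add₀ hx]
        simp
      have he : ((-1 : ℤ) ^ (K + 1 + 1)) = -((-1 : ℤ) ^ (K + 1)) := by ring
      rw [Finset.prod_range_succ, ih, hPs K, he]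
      exact cancel _ _ _ (hsne K)
  rw [key r]
  have har : a r = 0 := by
    rw [ha]
    simp only [hfin r le_rfl]
    exact Matrix.rank_zero
  have hTr : T (q r) = 1 := by
    have hdr : d r = 0 := hfin r le_rfl
    have hq0 : q r = X ^ (f r) := by
      rw [hq]
      simp only [hdr, Matrix.transpose_zero, Matrix.mul_zero]
      have := charpoly_diag (n := Fin (f r)) (fun _ => (0 : ℝ))
      rw [Matrix.diagonal_zero] at this
      rw [this]
      simp [Finset.prod_const, Fintype.card_fin]
    rw [hq0, T_X_pow]
  rw [hs]
  simp only [har, hTr, pow_zero, one_mul]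
  exact one_zpow _
end

section
/- For any finite chain complex, the squared analytic torsion A = ∏_k Det(L_k)^{k(-1)^{k+1}} equals the super pseudo determinant of the Dirac operator: A = ∏_k Det(D_k)^{(-1)^k}, where D_k = d_k^* d_k and L_k = d_k^* d_k + d_{k-1} d_{k-1}^*. -/
open Matrix

namespace ATaux

open Polynomial

variable {V : Type*} [Fintype V] [DecidableEq V]
variable {m n : Type*} [Fintype m] [Fintype n] [DecidableEq m] [DecidableEq n]

lemma charmatrix_eq (M : Matrix V V ℝ) :
    charmatrix M = Matrix.scalar V (X : ℝ[X]) - (C : ℝ →+* ℝ[X]).mapMatrix M := rfl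

lemma charpoly_conj (P A Q : Matrix V V ℝ) (hPQ : P * Q = 1) (hQP : Q * P = 1) :
    (P * A * Q).charpoly = A.charpoly := by
  have key : charmatrix (P * A * Q) =
      (C : ℝ →+* ℝ[X]).mapMatrix P * charmatrix A * (C : ℝ →+* ℝ[X]).mapMatrix Q := by
    simp only [charmatrix_eq, Matrix.mul_sub, Matrix.sub_mul, _root_.map_mul]
    congr 1
    rw [eq_comm, Matrix.mul_assoc, scalar_commute (X : ℝ[X]) (Commute.all _) _, ← Matrix.mul_assoc,
      ← RingHom.map_mul C.mapMatrix P Q, hPQ]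
    simp
  rw [Matrix.charpoly, key, det_mul, det_mul, mul_comm, ← mul_assoc, ← det_mul,
    ← RingHom.map_mul C.mapMatrix Q P, hQP]
  simp [Matrix.charpoly]

lemma charpoly_diagonal (v : V → ℝ) :
    (Matrix.diagonal v).charpoly = ∏ i, (X - C (v i)) := by
  have : charmatrix (Matrix.diagonal v) = Matrix.diagonal fun i => (X : ℝ[X]) - C (v i) := by
    ext i j
    by_cases h : i = j
    · subst h; simp [charmatrix_apply_eq]
    · simp [charmatrix_apply_ne _ _ _ h, Matrix.diagonal_apply_ne _ h]
  rw [Matrix.charpoly, this, det_diagonal]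

lemma charpoly_hermitian {A : Matrix V V ℝ} (hA : A.IsHermitian) :
    A.charpoly = ∏ i, (X - C (hA.eigenvalues i)) := by
  conv_lhs => rw [hA.spectral_theorem, Unitary.conjStarAlgAut_apply]
  rw [charpoly_conj _ _ _ (mem_unitaryGroup_iff.mp (hA.eigenvectorUnitary).2)
      (mem_unitaryGroup_iff'.mp (hA.eigenvectorUnitary).2)]
  have : (RCLike.ofReal ∘ hA.eigenvalues : V → ℝ) = hA.eigenvalues := by
    ext i; simp
  rw [this, charpoly_diagonal]

lemma key_struct {A : Matrix V V ℝ} (hA : A.IsHermitian) :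
    ∃ q : ℝ[X], A.charpoly = X ^ (Fintype.card V - A.rank) * q ∧ q.coeff 0 ≠ 0 ∧
      pseudoDet A = (-1 : ℝ) ^ A.rank * q.coeff 0 := by
  classical
  set μ := hA.eigenvalues with hμ
  have hrank : A.rank = (Finset.univ.filter (fun i => μ i ≠ 0)).card := by
    rw [hA.rank_eq_card_non_zero_eigs, Fintype.card_subtype]
  have hcard : (Finset.univ.filter (fun i => ¬ μ i ≠ 0)).card = Fintype.card V - A.rank := by
    have h1 := Finset.card_filter_add_card_filter_not (s := (Finset.univ : Finset V))
      (p := fun i => μ i ≠ 0)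
    have h2 : (Finset.univ : Finset V).card = Fintype.card V := Finset.card_univ
    rw [hrank]; omega
  have hfac : A.charpoly = X ^ (Fintype.card V - A.rank) *
      ∏ i ∈ Finset.univ.filter (fun i => μ i ≠ 0), (X - C (μ i)) := by
    rw [charpoly_hermitian hA, ← hμ, ← Finset.prod_filter_mul_prod_filter_not Finset.univ
      (fun i => μ i ≠ 0), mul_comm]
    congr 1
    rw [Finset.prod_congr rfl (fun i hi => ?_), Finset.prod_const, hcard]
    simp only [Finset.mem_filter, not_not] at hi
    rw [hi.2, map_zero, sub_zero]
  refine ⟨∏ i ∈ Finset.univ.filter (fun i => μ i ≠ 0), (X - C (μ i)), hfac, ?_, ?_⟩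
  · rw [coeff_zero_eq_eval_zero, eval_prod]
    apply Finset.prod_ne_zero_iff.mpr
    intro i hi
    simp only [Finset.mem_filter] at hi
    simp [hi.2]
  · rw [pseudoDet, hfac]
    have h := coeff_X_pow_mul (∏ i ∈ Finset.univ.filter (fun i => μ i ≠ 0), (X - C (μ i)))
      (Fintype.card V - A.rank) 0
    rw [zero_add] at h
    rw [h]

lemma pseudoDet_ne_zero {A : Matrix V V ℝ} (hA : A.IsHermitian) : pseudoDet A ≠ 0 := by
  obtain ⟨q, -, hq, hpd⟩ := key_struct hA
  rw [hpd]
  exact mul_ne_zero (pow_ne_zero _ (by norm_num)) hq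

lemma pseudoDet_zero : pseudoDet (0 : Matrix V V ℝ) = 1 := by
  rw [pseudoDet, Matrix.rank_zero, pow_zero, one_mul, Nat.sub_zero,
    ← Matrix.charpoly_natDegree_eq_dim (0 : Matrix V V ℝ),
    (Matrix.charpoly_monic _).coeff_natDegree]

lemma xpow_eq_aux {a b : ℕ} {u v : ℝ[X]} (hu : u.coeff 0 ≠ 0)
    (h : X ^ a * u = X ^ b * v) (hab : a ≤ b) : a = b := by
  by_contra hne
  have hc : b = a + (b - a) := by omega
  rw [hc, pow_add, mul_assoc] at h
  have hx : (X : ℝ[X]) ^ a ≠ 0 := pow_ne_zero _ X_ne_zero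
  have h2 := mul_left_cancel₀ hx h
  apply hu
  rw [h2, mul_coeff_zero, coeff_X_pow]
  simp [show ¬ (0 = b - a) by omega]

lemma xpow_eq {a b : ℕ} {u v : ℝ[X]} (hu : u.coeff 0 ≠ 0) (hv : v.coeff 0 ≠ 0)
    (h : X ^ a * u = X ^ b * v) : a = b := by
  rcases le_total a b with hab | hab
  · exact xpow_eq_aux hu h hab
  · exact (xpow_eq_aux hv h.symm hab).symm

lemma charpoly_add_of_mul_eq_zero {A B : Matrix V V ℝ} (hAB : A * B = 0) :
    A.charpoly * B.charpoly = X ^ (Fintype.card V) * (A + B).charpoly := by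
  have key : charmatrix A * charmatrix B = Matrix.scalar V (X : ℝ[X]) * charmatrix (A + B) := by
    show (Matrix.scalar V (X : ℝ[X]) - (C : ℝ →+* ℝ[X]).mapMatrix A) *
        (Matrix.scalar V (X : ℝ[X]) - (C : ℝ →+* ℝ[X]).mapMatrix B) = _
    show _ = Matrix.scalar V (X : ℝ[X]) *
        (Matrix.scalar V (X : ℝ[X]) - (C : ℝ →+* ℝ[X]).mapMatrix (A + B))
    rw [Matrix.sub_mul, Matrix.mul_sub, Matrix.mul_sub, map_add, Matrix.mul_sub, Matrix.mul_add,
      ← RingHom.map_mul C.mapMatrix A B, hAB]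
    simp only [map_zero]
    rw [(scalar_commute (X : ℝ[X]) (Commute.all _) ((C : ℝ →+* ℝ[X]).mapMatrix A)).eq]
    rw [sub_zero]; abel
  have hdet : det (Matrix.scalar V (X : ℝ[X])) = X ^ Fintype.card V := by
    rw [show Matrix.scalar V (X : ℝ[X]) = Matrix.diagonal (fun _ => X) from rfl, det_diagonal,
      Finset.prod_const, Finset.card_univ]
  rw [Matrix.charpoly, Matrix.charpoly, Matrix.charpoly, ← det_mul, key, det_mul, hdet]

lemma pseudoDet_add {A B : Matrix V V ℝ} (hA : A.IsHermitian) (hB : B.IsHermitian)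
    (hAB : A * B = 0) : pseudoDet (A + B) = pseudoDet A * pseudoDet B := by
  obtain ⟨qA, hfA, hqA, hpA⟩ := key_struct hA
  obtain ⟨qB, hfB, hqB, hpB⟩ := key_struct hB
  obtain ⟨q, hf, hq, hp⟩ := key_struct (hA.add hB)
  have hmain := charpoly_add_of_mul_eq_zero hAB
  rw [hfA, hfB, hf] at hmain
  have hmain' : X ^ ((Fintype.card V - A.rank) + (Fintype.card V - B.rank)) * (qA * qB) =
      X ^ (Fintype.card V + (Fintype.card V - (A + B).rank)) * q := by
    rw [pow_add, pow_add]; ring_nf; ring_nf at hmain; linear_combination hmain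
  have hqAB : (qA * qB).coeff 0 ≠ 0 := by
    rw [mul_coeff_zero]; exact mul_ne_zero hqA hqB
  have hexp := xpow_eq hqAB hq hmain'
  have hco : (qA * qB).coeff 0 = q.coeff 0 := by
    have h1 := congrArg (fun p => Polynomial.coeff p
      (0 + ((Fintype.card V - A.rank) + (Fintype.card V - B.rank)))) hmain'
    rw [coeff_X_pow_mul, hexp, coeff_X_pow_mul] at h1
    exact h1
  have hra : A.rank ≤ Fintype.card V := A.rank_le_card_width
  have hrb : B.rank ≤ Fintype.card V := B.rank_le_card_width
  have hrc : (A + B).rank ≤ Fintype.card V := (A + B).rank_le_card_width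
  have hrank : (A + B).rank = A.rank + B.rank := by omega
  rw [hp, hpA, hpB, hrank, ← hco, mul_coeff_zero, pow_add]
  ring

lemma charpoly_map_frac (M : Matrix m m ℝ) :
    (algebraMap ℝ[X] (FractionRing ℝ[X])) M.charpoly =
      det ((algebraMap ℝ[X] (FractionRing ℝ[X]) X) • (1 : Matrix m m (FractionRing ℝ[X]))
        - M.map (fun a => algebraMap ℝ[X] (FractionRing ℝ[X]) (C a))) := by
  rw [Matrix.charpoly, RingHom.map_det]
  congr 1
  ext i j
  by_cases h : i = j
  · subst h
    simp [charmatrix_apply_eq, Matrix.one_apply_eq, Algebra.algebraMap_eq_smul_one, sub_smul]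
  · simp [charmatrix_apply_ne _ _ _ h, Matrix.one_apply_ne h]

lemma det_smul_one_sub_comm {K : Type*} [Field K] {x : K} (hx : x ≠ 0)
    (P : Matrix m n K) (Q : Matrix n m K) :
    x ^ Fintype.card n * det (x • (1 : Matrix m m K) - P * Q) =
      x ^ Fintype.card m * det (x • (1 : Matrix n n K) - Q * P) := by
  have h1 : x • (1 : Matrix m m K) - P * Q = x • ((1 : Matrix m m K) - (x⁻¹ • P) * Q) := by
    rw [smul_sub, Matrix.smul_mul, smul_smul, mul_inv_cancel₀ hx, one_smul]
  have h2 : x • (1 : Matrix n n K) - Q * P = x • ((1 : Matrix n n K) - Q * (x⁻¹ • P)) := by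
    rw [smul_sub, Matrix.mul_smul, smul_smul, mul_inv_cancel₀ hx, one_smul]
  rw [h1, h2, det_smul, det_smul, det_one_sub_mul_comm]
  ring

lemma charpoly_mul_comm_pow (A : Matrix m n ℝ) (B : Matrix n m ℝ) :
    X ^ Fintype.card n * (A * B).charpoly = X ^ Fintype.card m * (B * A).charpoly := by
  set K := FractionRing ℝ[X]
  have hinj : Function.Injective (algebraMap ℝ[X] K) := IsFractionRing.injective _ _
  apply hinj
  have hx : (algebraMap ℝ[X] K) X ≠ 0 := by
    simp [map_eq_zero_iff _ hinj, X_ne_zero]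
  have hmap : ∀ (M : Matrix m n ℝ) (N : Matrix n m ℝ),
      (M * N).map (fun a => algebraMap ℝ[X] K (C a)) =
        M.map (fun a => algebraMap ℝ[X] K (C a)) * N.map (fun a => algebraMap ℝ[X] K (C a)) := by
    intro M N
    exact Matrix.map_mul (f := ((algebraMap ℝ[X] K).comp (C : ℝ →+* ℝ[X])))
  have hmap' : ∀ (M : Matrix n m ℝ) (N : Matrix m n ℝ),
      (M * N).map (fun a => algebraMap ℝ[X] K (C a)) =
        M.map (fun a => algebraMap ℝ[X] K (C a)) * N.map (fun a => algebraMap ℝ[X] K (C a)) := by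
    intro M N
    exact Matrix.map_mul (f := ((algebraMap ℝ[X] K).comp (C : ℝ →+* ℝ[X])))
  rw [_root_.map_mul, _root_.map_mul, map_pow, map_pow, charpoly_map_frac, charpoly_map_frac,
    hmap, hmap', det_smul_one_sub_comm hx]

lemma isHermitian_tmul (M : Matrix m n ℝ) : (Mᵀ * M).IsHermitian := by
  rw [← conjTranspose_eq_transpose_of_trivial]
  exact isHermitian_conjTranspose_mul_self M

lemma isHermitian_mult (M : Matrix m n ℝ) : (M * Mᵀ).IsHermitian := by
  have := isHermitian_tmul Mᵀ
  rwa [transpose_transpose] at this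

lemma pseudoDet_transpose_mul (M : Matrix m n ℝ) :
    pseudoDet (Mᵀ * M) = pseudoDet (M * Mᵀ) := by
  have h := charpoly_mul_comm_pow Mᵀ M
  have r1 : (Mᵀ * M).rank = M.rank := rank_transpose_mul_self M
  have r2 : (M * Mᵀ).rank = M.rank := rank_self_mul_transpose M
  have hrm : M.rank ≤ Fintype.card m := M.rank_le_card_height
  have hrn : M.rank ≤ Fintype.card n := M.rank_le_card_width
  unfold pseudoDet
  rw [r1, r2]
  congr 1
  have hc := congrArg (fun p => Polynomial.coeff p
    ((Fintype.card n - M.rank) + Fintype.card m)) h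
  rw [coeff_X_pow_mul] at hc
  rw [show (Fintype.card n - M.rank) + Fintype.card m =
    (Fintype.card m - M.rank) + Fintype.card n by omega, coeff_X_pow_mul] at hc
  exact hc

lemma tel (a b : ℕ → ℝ) (ha : ∀ k, a k ≠ 0)
    (hb : ∀ k, b (k + 1) = a (k + 1) * a k) (n : ℕ) :
    ∏ k ∈ Finset.range (n + 1), (b k) ^ ((k : ℤ) * (-1 : ℤ) ^ (k + 1)) =
      (∏ k ∈ Finset.range (n + 1), (a k) ^ ((-1 : ℤ) ^ k)) *
        (a n) ^ (-((n : ℤ) + 1) * (-1 : ℤ) ^ n) := by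
  induction n with
  | zero =>
    rw [Finset.prod_range_one, Finset.prod_range_one, ← zpow_add₀ (ha 0)]
    norm_num
  | succ n ih =>
    rw [Finset.prod_range_succ, ih, hb,
      Finset.prod_range_succ (fun k => a k ^ ((-1 : ℤ) ^ k)) (n + 1)]
    have e1 : ((n + 1 : ℕ) : ℤ) * (-1 : ℤ) ^ (n + 1 + 1) = ((n : ℤ) + 1) * (-1 : ℤ) ^ n := by
      push_cast; ring
    have e2 : ((-1 : ℤ)) ^ (n + 1) = -(-1 : ℤ) ^ n := by ring
    have e3 : -(((n + 1 : ℕ) : ℤ) + 1) * (-1 : ℤ) ^ (n + 1) =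
        ((n : ℤ) + 2) * (-1 : ℤ) ^ n := by push_cast; ring
    rw [e1, e3, e2, mul_zpow]
    set P := ∏ k ∈ Finset.range (n + 1), a k ^ ((-1 : ℤ) ^ k) with hP
    set E := (-1 : ℤ) ^ n with hE
    set N := (n : ℤ) with hN
    have h1 : a n ^ (-(N + 1) * E) * a n ^ ((N + 1) * E) = 1 := by
      rw [← zpow_add₀ (ha n), show -(N + 1) * E + (N + 1) * E = 0 by ring, zpow_zero]
    have h2 : a (n + 1) ^ (-E) * a (n + 1) ^ ((N + 2) * E) = a (n + 1) ^ ((N + 1) * E) := by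
      rw [← zpow_add₀ (ha (n + 1))]; congr 1; ring
    calc P * a n ^ (-(N + 1) * E) * (a (n + 1) ^ ((N + 1) * E) * a n ^ ((N + 1) * E))
        = P * (a n ^ (-(N + 1) * E) * a n ^ ((N + 1) * E)) * a (n + 1) ^ ((N + 1) * E) := by
          ring
      _ = P * a (n + 1) ^ ((N + 1) * E) := by rw [h1, mul_one]
      _ = P * (a (n + 1) ^ (-E) * a (n + 1) ^ ((N + 2) * E)) := by rw [h2]
      _ = P * a (n + 1) ^ (-E) * a (n + 1) ^ ((N + 2) * E) := by ring

end ATaux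

/-- for a finite chain complex given by matrices
`d k : ℝ^{f k} → ℝ^{f (k+1)}` with `d (k+1) * d k = 0` and `d k = 0` for `k ≥ r`,
the squared analytic torsion `∏_k Det(L k)^{k (-1)^{k+1}}` equals the super
pseudo determinant of the Dirac operator `∏_k Det(D k)^{(-1)^k}`, where
`D k = d_kᵀ d_k`, `L 0 = d₀ᵀ d₀` and `L (k+1) = d_{k+1}ᵀ d_{k+1} + d k d_kᵀ`. -/
theorem torsion_eq_superdet_dirac (r : ℕ) (f : ℕ → ℕ)
    (d : ∀ k : ℕ, Matrix (Fin (f (k + 1))) (Fin (f k)) ℝ)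
    (hcomplex : ∀ k, d (k + 1) * d k = 0)
    (hfin : ∀ k, r ≤ k → d k = 0)
    (L : ∀ k : ℕ, Matrix (Fin (f k)) (Fin (f k)) ℝ)
    (hL0 : L 0 = (d 0)ᵀ * d 0)
    (hLsucc : ∀ k, L (k + 1) = (d (k + 1))ᵀ * d (k + 1) + d k * (d k)ᵀ) :
    ∏ k ∈ Finset.range (r + 1), pseudoDet (L k) ^ ((k : ℤ) * (-1 : ℤ) ^ (k + 1)) =
      ∏ k ∈ Finset.range (r + 1), pseudoDet ((d k)ᵀ * d k) ^ ((-1 : ℤ) ^ k) := by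
  set a : ℕ → ℝ := fun k => pseudoDet ((d k)ᵀ * d k) with hadef
  have ha : ∀ k, a k ≠ 0 := fun k => ATaux.pseudoDet_ne_zero (ATaux.isHermitian_tmul (d k))
  have hb : ∀ k, pseudoDet (L (k + 1)) = a (k + 1) * a k := by
    intro k
    rw [hLsucc k]
    have h0 : ((d (k + 1))ᵀ * d (k + 1)) * (d k * (d k)ᵀ) = 0 := by
      calc ((d (k + 1))ᵀ * d (k + 1)) * (d k * (d k)ᵀ)
          = (d (k + 1))ᵀ * ((d (k + 1) * d k) * (d k)ᵀ) := by
            rw [Matrix.mul_assoc, Matrix.mul_assoc]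
        _ = 0 := by rw [hcomplex k, Matrix.zero_mul, Matrix.mul_zero]
    rw [ATaux.pseudoDet_add (ATaux.isHermitian_tmul (d (k + 1)))
      (ATaux.isHermitian_mult (d k)) h0, ← ATaux.pseudoDet_transpose_mul (d k)]
  rw [ATaux.tel a (fun k => pseudoDet (L k)) ha hb r]
  have har : a r = 1 := by
    rw [hadef]
    simp only [hfin r le_rfl, Matrix.transpose_zero, Matrix.mul_zero]
    exact ATaux.pseudoDet_zero
  rw [har, _root_.one_zpow, mul_one]
end

section
/- The number of rooted spanning trees of the complete bipartite graph K_{n,m} is n^{m-1} · m^{n-1} · (n+m); equivalently, the pseudo determinant of the Kirchhoff Laplacian of K_{n,m} equals n^{m-1} m^{n-1} (n+m). -/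
open Matrix
open scoped Classical
open Polynomial

set_option synthInstance.maxHeartbeats 1000000
set_option maxHeartbeats 1000000

noncomputable abbrev φR : Polynomial ℝ →+* RatFunc ℝ := algebraMap (Polynomial ℝ) (RatFunc ℝ)

lemma detCB (a b : ℕ) :
    (Matrix.fromBlocks (Matrix.diagonal fun _ : Fin (a+1) => φR (X - C ((b+1 : ℕ):ℝ)))
        (Matrix.of fun _ _ => 1) (Matrix.of fun _ _ => 1)
        (Matrix.diagonal fun _ : Fin (b+1) => φR (X - C ((a+1 : ℕ):ℝ)))).det =
      φR (X * (X - C (((a+1:ℕ):ℝ) + ((b+1:ℕ):ℝ))) * (X - C ((b+1:ℕ):ℝ)) ^ a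
        * (X - C ((a+1:ℕ):ℝ)) ^ b) := by
  have hinj := IsFractionRing.injective (Polynomial ℝ) (RatFunc ℝ)
  set c : RatFunc ℝ := φR (X - C ((b+1 : ℕ):ℝ)) with hcdef
  set d : RatFunc ℝ := φR (X - C ((a+1 : ℕ):ℝ)) with hddef
  have hc : c ≠ 0 := by
    simp only [hcdef]
    exact fun h => X_sub_C_ne_zero ((b+1 : ℕ):ℝ) (hinj (by simpa using h))
  have hd : d ≠ 0 := by
    simp only [hddef]
    exact fun h => X_sub_C_ne_zero ((a+1 : ℕ):ℝ) (hinj (by simpa using h))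
  haveI : Invertible (Matrix.diagonal fun _ : Fin (a+1) => c) :=
    Matrix.invertibleOfIsUnitDet _ (by
      rw [Matrix.det_diagonal]
      exact isUnit_iff_ne_zero.2 (by simpa using pow_ne_zero (a+1) hc))
  rw [Matrix.det_fromBlocks₁₁]
  have hinv : ⅟(Matrix.diagonal fun _ : Fin (a+1) => c) = Matrix.diagonal fun _ => c⁻¹ := by
    apply invOf_eq_right_inv
    rw [Matrix.diagonal_mul_diagonal]
    simp [mul_inv_cancel₀ hc]
  rw [hinv]
  have hS : (Matrix.diagonal fun _ : Fin (b+1) => d) -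
      (Matrix.of fun (_ : Fin (b+1)) (_ : Fin (a+1)) => (1 : RatFunc ℝ)) *
        (Matrix.diagonal fun _ : Fin (a+1) => c⁻¹) *
        (Matrix.of fun (_ : Fin (a+1)) (_ : Fin (b+1)) => (1 : RatFunc ℝ)) =
      d • (1 + Matrix.replicateCol Unit (fun _ : Fin (b+1) => -(((a+1:ℕ):RatFunc ℝ) * c⁻¹ * d⁻¹))
        * Matrix.replicateRow Unit (fun _ : Fin (b+1) => (1 : RatFunc ℝ))) := by
    ext i j
    by_cases h : i = j <;>
      · simp [Matrix.mul_apply, Matrix.diagonal, Matrix.one_apply, h, Matrix.smul_apply,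
          Matrix.add_apply, Matrix.replicateCol_apply, Matrix.replicateRow_apply, smul_eq_mul]
        field_simp
        all_goals ring
  rw [hS, Matrix.det_smul, Matrix.det_one_add_replicateCol_mul_replicateRow, Matrix.det_diagonal]
  simp only [dotProduct, Finset.sum_const, Finset.card_univ, Fintype.card_fin, one_mul,
    nsmul_eq_mul, Finset.prod_const, Finset.card_univ]
  have hx : φR (X * (X - C (((a+1:ℕ):ℝ) + ((b+1:ℕ):ℝ))) * (X - C ((b+1:ℕ):ℝ)) ^ a
      * (X - C ((a+1:ℕ):ℝ)) ^ b) = φR X * (φR X - (((a+1:ℕ):RatFunc ℝ) + ((b+1:ℕ):RatFunc ℝ)))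
      * c ^ a * d ^ b := by
    simp [hcdef, hddef, map_sub, _root_.map_mul, map_pow, map_natCast, map_add]
  rw [hx]
  have hcd : c = RatFunc.X - ((b+1:ℕ):RatFunc ℝ) := by
    simp [hcdef, map_sub, map_natCast, RatFunc.algebraMap_X]
  have hdd : d = RatFunc.X - ((a+1:ℕ):RatFunc ℝ) := by
    simp [hddef, map_sub, map_natCast, RatFunc.algebraMap_X]
  have hkey : c * d - ((b+1:ℕ):RatFunc ℝ) * ((a+1:ℕ):RatFunc ℝ) =
      φR X * (φR X - (((a+1:ℕ):RatFunc ℝ) + ((b+1:ℕ):RatFunc ℝ))) := by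
    rw [hcd, hdd, RatFunc.algebraMap_X]
    push_cast
    ring
  calc c ^ (a+1) * (d ^ (b+1) * (1 + ↑(b+1) * -(↑(a+1) * c⁻¹ * d⁻¹)))
      = c ^ a * d ^ b * (c * d - ((b+1:ℕ):RatFunc ℝ) * ((a+1:ℕ):RatFunc ℝ)) := by
        rw [pow_succ c a, pow_succ d b]
        field_simp
        ring
    _ = φR X * (φR X - (((a+1:ℕ):RatFunc ℝ) + ((b+1:ℕ):RatFunc ℝ))) * c ^ a * d ^ b := by
        rw [hkey]; ring

lemma lapCB (n m : ℕ) :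
    (completeBipartiteGraph (Fin n) (Fin m)).lapMatrix ℝ =
      Matrix.fromBlocks ((m : ℝ) • 1) (-(Matrix.of fun _ _ => 1))
        (-(Matrix.of fun _ _ => 1)) ((n : ℝ) • 1) := by
  have hdl : ∀ i : Fin n, (completeBipartiteGraph (Fin n) (Fin m)).degree (Sum.inl i) = m := by
    intro i
    rw [← SimpleGraph.card_neighborFinset_eq_degree]
    have : (completeBipartiteGraph (Fin n) (Fin m)).neighborFinset (Sum.inl i)
        = Finset.univ.map ⟨Sum.inr, Sum.inr_injective⟩ := by
      ext (w|w) <;> simp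
    simp [this]
  have hdr : ∀ i : Fin m, (completeBipartiteGraph (Fin n) (Fin m)).degree (Sum.inr i) = n := by
    intro i
    rw [← SimpleGraph.card_neighborFinset_eq_degree]
    have : (completeBipartiteGraph (Fin n) (Fin m)).neighborFinset (Sum.inr i)
        = Finset.univ.map ⟨Sum.inl, Sum.inl_injective⟩ := by
      ext (w|w) <;> simp
    simp [this]
  ext (i|i) (j|j) <;>
    simp [SimpleGraph.lapMatrix, SimpleGraph.degMatrix, hdl, hdr, Matrix.one_apply,
      Sum.inl.injEq, Matrix.diagonal, Matrix.of_apply]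

lemma charmapCB (n m : ℕ) :
    (charmatrix (Matrix.fromBlocks ((m : ℝ) • (1 : Matrix (Fin n) (Fin n) ℝ))
        (-(Matrix.of fun _ _ => 1)) (-(Matrix.of fun _ _ => 1))
        ((n : ℝ) • (1 : Matrix (Fin m) (Fin m) ℝ)))).map φR =
      Matrix.fromBlocks (Matrix.diagonal fun _ => φR (X - C (m:ℝ)))
        (Matrix.of fun _ _ => 1) (Matrix.of fun _ _ => 1)
        (Matrix.diagonal fun _ => φR (X - C (n:ℝ))) := by
  ext (i|i) (j|j)
  · by_cases h : i = j <;> simp [charmatrix_apply, Matrix.one_apply, Matrix.diagonal, h, map_sub]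
  · simp [charmatrix_apply, Matrix.diagonal]
  · simp [charmatrix_apply, Matrix.diagonal]
  · by_cases h : i = j <;> simp [charmatrix_apply, Matrix.one_apply, Matrix.diagonal, h, map_sub]

lemma charpolyCB (a b : ℕ) :
    ((completeBipartiteGraph (Fin (a+1)) (Fin (b+1))).lapMatrix ℝ).charpoly =
      X * (X - C (((a+1:ℕ):ℝ) + ((b+1:ℕ):ℝ))) * (X - C ((b+1:ℕ):ℝ)) ^ a
        * (X - C ((a+1:ℕ):ℝ)) ^ b := by
  apply IsFractionRing.injective (Polynomial ℝ) (RatFunc ℝ)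
  show φR _ = φR _
  rw [Matrix.charpoly, RingHom.map_det, RingHom.mapMatrix_apply, lapCB, charmapCB, detCB]

lemma rankCB (n m : ℕ) (hn : 1 ≤ n) (hm : 1 ≤ m) :
    ((completeBipartiteGraph (Fin n) (Fin m)).lapMatrix ℝ).rank = n + m - 1 := by
  set G := completeBipartiteGraph (Fin n) (Fin m) with hG
  have i0 : Fin n := ⟨0, hn⟩
  have j0 : Fin m := ⟨0, hm⟩
  have hadj : ∀ (i : Fin n) (j : Fin m), G.Adj (Sum.inl i) (Sum.inr j) := by
    intro i j; simp [hG]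
  have hconn : G.Preconnected := by
    rintro (i|i) (j|j)
    · exact ((hadj i j0).reachable.trans (hadj j j0).reachable.symm)
    · exact (hadj i j).reachable
    · exact (hadj j i).reachable.symm
    · exact ((hadj i0 i).reachable.symm.trans (hadj i0 j).reachable)
  have hcard1 : Fintype.card G.ConnectedComponent = 1 := by
    have hne : 0 < Fintype.card G.ConnectedComponent :=
      Fintype.card_pos_iff.mpr ⟨G.connectedComponentMk (Sum.inl i0)⟩
    have hsub : Subsingleton G.ConnectedComponent := by
      constructor
      intro x y
      refine SimpleGraph.ConnectedComponent.ind₂ (fun u v => ?_) x y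
      exact SimpleGraph.ConnectedComponent.sound (hconn u v)
    have := Fintype.card_le_one_iff_subsingleton.mpr hsub
    omega
  have hker : Module.finrank ℝ (LinearMap.ker (Matrix.toLin' (G.lapMatrix ℝ))) = 1 := by
    rw [← SimpleGraph.card_connectedComponent_eq_finrank_ker_toLin'_lapMatrix, hcard1]
  have htl : Matrix.toLin' (G.lapMatrix ℝ) = Matrix.mulVecLin (G.lapMatrix ℝ) :=
    LinearMap.ext fun v => by rw [Matrix.toLin'_apply, Matrix.mulVecLin_apply]
  have hrn := LinearMap.finrank_range_add_finrank_ker (Matrix.mulVecLin (G.lapMatrix ℝ))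
  rw [← htl, hker, Module.finrank_fintype_fun_eq_card] at hrn
  rw [Matrix.rank]
  rw [htl] at hrn
  simp only [Fintype.card_sum, Fintype.card_fin] at hrn
  omega

/-- the number of rooted spanning trees of the complete bipartite
graph `K_{n,m}` (with `n, m ≥ 1`), i.e. the pseudo determinant of its Kirchhoff
Laplacian, equals `n^{m-1} · m^{n-1} · (n+m)`. -/
theorem pseudoDet_lapMatrix_completeBipartite (n m : ℕ) (hn : 1 ≤ n) (hm : 1 ≤ m) :
    pseudoDet ((completeBipartiteGraph (Fin n) (Fin m)).lapMatrix ℝ) =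
      (n : ℝ) ^ (m - 1) * (m : ℝ) ^ (n - 1) * (n + m : ℝ) := by
  obtain ⟨a, rfl⟩ : ∃ a, n = a + 1 := ⟨n - 1, by omega⟩
  obtain ⟨b, rfl⟩ : ∃ b, m = b + 1 := ⟨m - 1, by omega⟩
  rw [pseudoDet, rankCB _ _ hn hm, charpolyCB]
  have hcV : Fintype.card (Fin (a+1) ⊕ Fin (b+1)) = a + 1 + (b+1) := by
    simp [Fintype.card_sum]
  rw [hcV]
  have h1 : a + 1 + (b + 1) - (a + 1 + (b + 1) - 1) = 0 + 1 := by omega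
  have h2 : a + 1 + (b + 1) - 1 = a + b + 1 := by omega
  rw [h1, h2]
  have hre : X * (X - C (((a+1:ℕ):ℝ) + ((b+1:ℕ):ℝ))) * (X - C ((b+1:ℕ):ℝ)) ^ a
      * (X - C ((a+1:ℕ):ℝ)) ^ b =
      X * ((X - C (((a+1:ℕ):ℝ) + ((b+1:ℕ):ℝ))) * (X - C ((b+1:ℕ):ℝ)) ^ a
        * (X - C ((a+1:ℕ):ℝ)) ^ b) := by ring
  rw [hre, Polynomial.coeff_X_mul, Polynomial.coeff_zero_eq_eval_zero]
  simp only [eval_mul, eval_pow, eval_sub, eval_X, eval_C, zero_sub, Nat.add_sub_cancel]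
  have hsign : ((-1:ℝ))^(a+b+1) * ((-1:ℝ))^(a+b+1) = 1 := by
    rw [← pow_add, ← two_mul, pow_mul]; norm_num
  have key : ∀ (A B : ℝ), (-1:ℝ)^(a+b+1) * (-(A+B) * (-B)^a * (-A)^b) =
      ((-1:ℝ)^(a+b+1) * (-1:ℝ)^(a+b+1)) * ((A+B) * B^a * A^b) := by
    intro A B
    rw [neg_pow, neg_pow]
    ring
  rw [key ((a+1:ℕ):ℝ) ((b+1:ℕ):ℝ), hsign, one_mul]
  push_cast
  ring
end

section
/- For the complete graph K_n (n ≥ 2) and its Whitney complex, the pseudo determinant of the k-th Dirac block satisfies Det(D_k(K_n)) = n^{C(n-1, k+1)} for all k ≥ 0, where D_k = d_k^* d_k and C denotes binomial coefficients. -/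
open Matrix

/-- The `k`-dimensional simplices of the Whitney complex of the complete graph
`K n`: subsets of `{1,…,n}` of cardinality `k+1`. -/
def CompleteSimplex (n k : ℕ) := {s : Finset (Fin n) // s.card = k + 1}

instance (n k : ℕ) : Fintype (CompleteSimplex n k) := by
  unfold CompleteSimplex; infer_instance

instance (n k : ℕ) : DecidableEq (CompleteSimplex n k) := by
  unfold CompleteSimplex; infer_instance

/-- The signed incidence matrix (exterior derivative) `d_k` from `k`-forms to
`(k+1)`-forms of the Whitney complex of `K n`, with simplices ordered by the
natural order on `Fin n`: the entry at `(s, t)` with `t ⊆ s` is `(-1)^i` where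
`i` is the position in `s` of the vertex missing from `t`. -/
def completeD (n k : ℕ) :
    Matrix (CompleteSimplex n (k + 1)) (CompleteSimplex n k) ℝ :=
  fun s t =>
    if t.1 ⊆ s.1 then
      ∑ a ∈ s.1 \ t.1, (-1 : ℝ) ^ (s.1.filter (fun b => b < a)).card
    else 0


open Finset

namespace CayleyAux

variable {n : ℕ}

/-- The sign `(-1)^{#{b ∈ s | b < a}}`. -/
def esgn (s : Finset (Fin n)) (a : Fin n) : ℝ :=
  (-1 : ℝ) ^ (s.filter (fun b => b < a)).card

lemma esgn_sq (s : Finset (Fin n)) (a : Fin n) : esgn s a * esgn s a = 1 := by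
  unfold esgn; rw [← mul_pow]; norm_num

lemma esgn_insert_of_not_lt {a c : Fin n} (s : Finset (Fin n)) (h : ¬ a < c) :
    esgn (insert a s) c = esgn s c := by
  unfold esgn; rw [filter_insert, if_neg h]

lemma esgn_insert_of_lt {a c : Fin n} {s : Finset (Fin n)} (h : a < c) (ha : a ∉ s) :
    esgn (insert a s) c = - esgn s c := by
  unfold esgn
  rw [filter_insert, if_pos h, card_insert_of_notMem (by simp [ha]), pow_succ]
  ring

lemma esgn_e1 {a b : Fin n} {t : Finset (Fin n)} (hab : a < b) (ha : a ∉ t) (hb : b ∉ t) :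
    esgn (insert a (insert b t)) b = - esgn t b := by
  rw [esgn_insert_of_lt hab (by simp [ha, hab.ne]), esgn_insert_of_not_lt _ (lt_irrefl b)]

lemma esgn_e2 {a b : Fin n} {t : Finset (Fin n)} (hab : a < b) :
    esgn (insert a (insert b t)) a = esgn t a := by
  rw [esgn_insert_of_not_lt _ (lt_irrefl a), esgn_insert_of_not_lt _ (by exact fun h => absurd hab h.asymm)]

lemma esgn_self_insert {a : Fin n} (t : Finset (Fin n)) :
    esgn (insert a t) a = esgn t a := esgn_insert_of_not_lt _ (lt_irrefl a)

/-- Sign identity for `d ∘ d = 0`. -/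
lemma esgn_I1 {a b : Fin n} {t : Finset (Fin n)} (hab : a ≠ b) (ha : a ∉ t) (hb : b ∉ t) :
    esgn (insert a (insert b t)) b * esgn (insert a t) a
      + esgn (insert a (insert b t)) a * esgn (insert b t) b = 0 := by
  rcases hab.lt_or_gt with h | h
  · rw [esgn_e1 h ha hb, esgn_e2 h, esgn_self_insert, esgn_self_insert]; ring
  · rw [Finset.insert_comm, esgn_e1 h hb ha, esgn_e2 h, esgn_self_insert, esgn_self_insert]; ring

/-- Sign identity for the off-diagonal Laplacian cancellation. -/
lemma esgn_I2 {a b : Fin n} {t : Finset (Fin n)} (hab : a ≠ b) (ha : a ∉ t) (hb : b ∉ t) :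
    esgn (insert a (insert b t)) b * esgn (insert a (insert b t)) a
      + esgn (insert a t) a * esgn (insert b t) b = 0 := by
  rcases hab.lt_or_gt with h | h
  · rw [esgn_e1 h ha hb, esgn_e2 h, esgn_self_insert, esgn_self_insert]; ring
  · rw [Finset.insert_comm, esgn_e1 h hb ha, esgn_e2 h, esgn_self_insert, esgn_self_insert]; ring

lemma exists_insert_of_subset_card {s t : Finset (Fin n)} (h : t ⊆ s)
    (hcard : s.card = t.card + 1) : ∃ a, a ∉ t ∧ s = insert a t := by
  have h1 : (s \ t).card = 1 := by rw [card_sdiff_of_subset h]; omega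
  obtain ⟨a, ha⟩ := Finset.card_eq_one.mp h1
  have hat : a ∈ s \ t := ha ▸ Finset.mem_singleton_self a
  refine ⟨a, (Finset.mem_sdiff.mp hat).2, ?_⟩
  apply Finset.Subset.antisymm
  · intro x hx
    by_cases hxt : x ∈ t
    · exact Finset.mem_insert_of_mem hxt
    · have : x ∈ s \ t := Finset.mem_sdiff.mpr ⟨hx, hxt⟩
      rw [ha, Finset.mem_singleton] at this
      simp [this]
  · intro x hx
    rcases Finset.mem_insert.mp hx with rfl | hx
    · exact (Finset.mem_sdiff.mp hat).1
    · exact h hx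

lemma completeD_apply_insert {k : ℕ} (s : CompleteSimplex n (k+1)) (t : CompleteSimplex n k)
    (a : Fin n) (ha : a ∉ t.1) (hs : s.1 = insert a t.1) :
    completeD n k s t = esgn s.1 a := by
  unfold completeD
  rw [if_pos (by rw [hs]; exact Finset.subset_insert _ _)]
  have hd : s.1 \ t.1 = {a} := by
    rw [hs]
    ext x
    simp only [Finset.mem_sdiff, Finset.mem_insert, Finset.mem_singleton]
    constructor
    · rintro ⟨rfl | hx, hxt⟩
      · rfl
      · exact absurd hx hxt
    · rintro rfl; exact ⟨Or.inl rfl, ha⟩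
  rw [hd, Finset.sum_singleton]
  rfl

lemma completeD_eq_zero {k : ℕ} {s : CompleteSimplex n (k+1)} {t : CompleteSimplex n k}
    (h : ¬ t.1 ⊆ s.1) : completeD n k s t = 0 := if_neg h

/-- Number of cofaces of a `m`-simplex in the complete complex. -/
lemma card_cofaces (m : ℕ) (t : Finset (Fin n)) (ht : t.card = m + 1) :
    (univ.filter (fun s : CompleteSimplex n (m+1) => t ⊆ s.1)).card = n - (m + 1) := by
  have : (tᶜ : Finset (Fin n)).card = n - (m + 1) := by
    rw [Finset.card_compl, ht, Fintype.card_fin]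
  rw [← this]
  symm
  apply Finset.card_bij (i := fun (a : Fin n) (ha : a ∈ tᶜ) =>
    (⟨insert a t, by rw [Finset.card_insert_of_notMem (Finset.mem_compl.mp ha), ht]⟩ :
      CompleteSimplex n (m+1)))
  · intro a ha
    refine Finset.mem_filter.mpr ⟨Finset.mem_univ _, ?_⟩
    exact Finset.subset_insert _ _
  · intro a ha a' ha' he
    have : insert a t = insert a' t := congrArg Subtype.val he
    have haa : a ∈ insert a' t := this ▸ Finset.mem_insert_self a t
    rcases Finset.mem_insert.mp haa with h | h
    · exact h
    · exact absurd h (Finset.mem_compl.mp ha)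
  · intro s hs
    have hs := (Finset.mem_filter.mp hs).2
    obtain ⟨a, hat, hsa⟩ := exists_insert_of_subset_card hs (by rw [s.2, ht])
    exact ⟨a, Finset.mem_compl.mpr hat, Subtype.ext hsa.symm⟩

/-- Number of faces of a `(k+1)`-simplex in the complete complex. -/
lemma card_faces (k : ℕ) (s : Finset (Fin n)) (hs : s.card = k + 2) :
    (univ.filter (fun t : CompleteSimplex n k => t.1 ⊆ s)).card = k + 2 := by
  rw [← hs]
  symm
  apply Finset.card_bij (i := fun (a : Fin n) (ha : a ∈ s) =>
    (⟨s.erase a, by simp [Finset.card_erase_of_mem ha, hs]⟩ : CompleteSimplex n k))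
  · intro a ha
    refine Finset.mem_filter.mpr ⟨Finset.mem_univ _, ?_⟩
    exact Finset.erase_subset _ _
  · intro a ha a' ha' he
    exact Finset.erase_injOn s ha ha' (congrArg Subtype.val he)
  · intro t htf
    have htf := (Finset.mem_filter.mp htf).2
    obtain ⟨a, hat, hsa⟩ := exists_insert_of_subset_card htf (by rw [t.2, hs])
    have has : a ∈ s := by rw [hsa]; exact Finset.mem_insert_self a _
    refine ⟨a, has, Subtype.ext ?_⟩
    show s.erase a = t.1
    rw [hsa, Finset.erase_insert hat]


lemma d_sq {k : ℕ} (u : CompleteSimplex n (k+1)) (t : CompleteSimplex n k) :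
    completeD n k u t * completeD n k u t = if t.1 ⊆ u.1 then 1 else 0 := by
  by_cases h : t.1 ⊆ u.1
  · obtain ⟨a, hat, hu⟩ := exists_insert_of_subset_card h (by rw [u.2, t.2])
    rw [completeD_apply_insert u t a hat hu, if_pos h, esgn_sq]
  · rw [completeD_eq_zero h, if_neg h, mul_zero]

/-- The simplex Laplacian identity: the full Laplacian on `(k+1)`-forms is `n • 1`. -/
lemma laplacian (n k : ℕ) :
    (completeD n (k+1))ᵀ * completeD n (k+1) + completeD n k * (completeD n k)ᵀ
      = (n : ℝ) • (1 : Matrix (CompleteSimplex n (k+1)) (CompleteSimplex n (k+1)) ℝ) := by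
  ext s s'
  simp only [Matrix.add_apply, Matrix.mul_apply, Matrix.transpose_apply, Matrix.smul_apply,
    Matrix.one_apply, smul_eq_mul]
  by_cases hss : s = s'
  · subst hss
    rw [if_pos rfl, mul_one]
    have h1 : ∑ u : CompleteSimplex n (k+2), completeD n (k+1) u s * completeD n (k+1) u s
        = ((n - (k+2) : ℕ) : ℝ) := by
      rw [← card_cofaces (k+1) s.1 s.2]
      rw [Finset.card_eq_sum_ones, Nat.cast_sum]
      rw [Finset.sum_filter]
      congr 1
      ext u
      rw [d_sq]
      by_cases h : s.1 ⊆ u.1 <;> simp [h]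
    have h2 : ∑ t : CompleteSimplex n k, completeD n k s t * completeD n k s t
        = ((k + 2 : ℕ) : ℝ) := by
      rw [← card_faces k s.1 s.2]
      rw [Finset.card_eq_sum_ones, Nat.cast_sum]
      rw [Finset.sum_filter]
      congr 1
      ext t
      rw [d_sq]
      by_cases h : t.1 ⊆ s.1 <;> simp [h]
    rw [h1, h2]
    have hle : k + 2 ≤ n := by
      have := Finset.card_le_univ s.1
      rwa [s.2, Fintype.card_fin] at this
    push_cast [Nat.cast_sub hle]
    ring
  · rw [if_neg hss, mul_zero]
    have hcards : s.1.card = k + 2 := s.2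
    have hcards' : s'.1.card = k + 2 := s'.2
    set c := (s.1 ∩ s'.1).card with hc
    have hcle : c ≤ k + 1 := by
      by_contra hgt
      push_neg at hgt
      have h1 : c ≤ k + 2 := by
        have := Finset.card_le_card (Finset.inter_subset_left : s.1 ∩ s'.1 ⊆ s.1)
        omega
      have heq : s.1 ∩ s'.1 = s.1 :=
        Finset.eq_of_subset_of_card_le Finset.inter_subset_left (by omega)
      have hsub2 : s.1 ⊆ s'.1 := by rw [← heq]; exact Finset.inter_subset_right
      exact hss (Subtype.ext (Finset.eq_of_subset_of_card_le hsub2 (by omega)))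
    rcases Nat.lt_or_ge c (k + 1) with hlt | hge
    · -- intersection too small: all terms vanish
      rw [Finset.sum_eq_zero, Finset.sum_eq_zero, add_zero]
      · intro t _
        by_cases h1 : t.1 ⊆ s.1
        · by_cases h2 : t.1 ⊆ s'.1
          · exfalso
            have := Finset.card_le_card (Finset.subset_inter h1 h2)
            rw [t.2] at this
            omega
          · rw [completeD_eq_zero h2, mul_zero]
        · rw [completeD_eq_zero h1, zero_mul]
      · intro u _
        by_cases h1 : s.1 ⊆ u.1
        · by_cases h2 : s'.1 ⊆ u.1
          · exfalso
            have hu : (s.1 ∪ s'.1).card ≤ u.1.card :=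
              Finset.card_le_card (Finset.union_subset h1 h2)
            have := Finset.card_union_add_card_inter s.1 s'.1
            rw [u.2] at hu
            omega
          · rw [completeD_eq_zero h2, mul_zero]
        · rw [completeD_eq_zero h1, zero_mul]
    · -- intersection has cardinality k+1
      have hceq : c = k + 1 := le_antisymm hcle hge
      obtain ⟨t0, ht0⟩ : ∃ u : Finset (Fin n), u = s.1 ∩ s'.1 := ⟨_, rfl⟩
      have ht0card : t0.card = k + 1 := by rw [ht0]; omega
      obtain ⟨a, hat, hsa⟩ := exists_insert_of_subset_card
        (show t0 ⊆ s.1 by rw [ht0]; exact Finset.inter_subset_left) (by omega)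
      obtain ⟨b, hbt, hsb⟩ := exists_insert_of_subset_card
        (show t0 ⊆ s'.1 by rw [ht0]; exact Finset.inter_subset_right) (by omega)
      have hab : a ≠ b := by
        rintro rfl
        exact hss (Subtype.ext (hsa.trans hsb.symm))
      have has : a ∈ s.1 := by rw [hsa]; exact Finset.mem_insert_self _ _
      have hbs' : b ∈ s'.1 := by rw [hsb]; exact Finset.mem_insert_self _ _
      have has' : a ∉ s'.1 := fun h => hat (by rw [ht0]; exact Finset.mem_inter.mpr ⟨has, h⟩)
      have hbs : b ∉ s.1 := fun h => hbt (by rw [ht0]; exact Finset.mem_inter.mpr ⟨h, hbs'⟩)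
      have hanotin : a ∉ insert b t0 := by rw [← hsb]; exact has'
      have hU0card : (insert a (insert b t0)).card = k + 2 + 1 := by
        rw [Finset.card_insert_of_notMem hanotin, Finset.card_insert_of_notMem hbt]
        omega
      let U0 : CompleteSimplex n (k + 2) := ⟨insert a (insert b t0), hU0card⟩
      let T0 : CompleteSimplex n k := ⟨t0, ht0card⟩
      have hUs : U0.1 = insert b s.1 := by
        show insert a (insert b t0) = insert b s.1
        rw [hsa, Finset.insert_comm]
      have hUs' : U0.1 = insert a s'.1 := by
        show insert a (insert b t0) = insert a s'.1
        rw [hsb]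
      have hsum1 : ∑ u : CompleteSimplex n (k + 1 + 1),
          completeD n (k+1) u s * completeD n (k+1) u s'
          = esgn U0.1 b * esgn U0.1 a := by
        rw [Finset.sum_eq_single_of_mem U0 (Finset.mem_univ _)]
        · rw [completeD_apply_insert U0 s b hbs hUs, completeD_apply_insert U0 s' a has' hUs']
        · intro u _ hu
          by_cases h1 : s.1 ⊆ u.1
          · by_cases h2 : s'.1 ⊆ u.1
            · exfalso
              apply hu
              have hsub : U0.1 ⊆ u.1 := by
                rw [hUs']
                intro x hx
                rcases Finset.mem_insert.mp hx with rfl | hx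
                · exact h1 has
                · exact h2 hx
              exact Subtype.ext (Finset.eq_of_subset_of_card_le hsub (by rw [u.2, U0.2])).symm
            · rw [completeD_eq_zero h2, mul_zero]
          · rw [completeD_eq_zero h1, zero_mul]
      have hsum2 : ∑ t : CompleteSimplex n k,
          completeD n k s t * completeD n k s' t
          = esgn s.1 a * esgn s'.1 b := by
        rw [Finset.sum_eq_single_of_mem T0 (Finset.mem_univ _)]
        · rw [completeD_apply_insert s T0 a hat hsa, completeD_apply_insert s' T0 b hbt hsb]
        · intro t _ ht
          by_cases h1 : t.1 ⊆ s.1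
          · by_cases h2 : t.1 ⊆ s'.1
            · exfalso
              apply ht
              have hsub : t.1 ⊆ t0 := by rw [ht0]; exact Finset.subset_inter h1 h2
              exact Subtype.ext (Finset.eq_of_subset_of_card_le hsub (by rw [t.2, ht0card]))
            · rw [completeD_eq_zero h2, mul_zero]
          · rw [completeD_eq_zero h1, zero_mul]
      rw [hsum1, hsum2, hsa, hsb]
      exact esgn_I2 hab hat hbt


/-- `d ∘ d = 0` for the Whitney complex of the complete graph. -/
lemma d_comp_d (n k : ℕ) : completeD n (k+1) * completeD n k = 0 := by
  ext u t
  simp only [Matrix.mul_apply, Matrix.zero_apply]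
  by_cases h : t.1 ⊆ u.1
  · have hcard2 : (u.1 \ t.1).card = 2 := by
      rw [Finset.card_sdiff_of_subset h, u.2, t.2]; omega
    obtain ⟨a, b, hab, hexp⟩ := Finset.card_eq_two.mp hcard2
    have hau : a ∈ u.1 \ t.1 := by rw [hexp]; simp
    have hbu : b ∈ u.1 \ t.1 := by rw [hexp]; simp
    have hat : a ∉ t.1 := (Finset.mem_sdiff.mp hau).2
    have hbt : b ∉ t.1 := (Finset.mem_sdiff.mp hbu).2
    have hanotin : a ∉ insert b t.1 := by simp [hab, hat]
    have hbnotin : b ∉ insert a t.1 := by simp [Ne.symm hab, hbt]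
    have hu : u.1 = insert a (insert b t.1) := by
      apply Finset.Subset.antisymm
      · intro x hx
        by_cases hxt : x ∈ t.1
        · simp [hxt]
        · have hx2 : x ∈ u.1 \ t.1 := Finset.mem_sdiff.mpr ⟨hx, hxt⟩
          rw [hexp] at hx2
          simp only [Finset.mem_insert, Finset.mem_singleton] at hx2
          rcases hx2 with rfl | rfl <;> simp
      · intro x hx
        rcases Finset.mem_insert.mp hx with rfl | hx
        · exact (Finset.mem_sdiff.mp hau).1
        · rcases Finset.mem_insert.mp hx with rfl | hx
          · exact (Finset.mem_sdiff.mp hbu).1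
          · exact h hx
    have hsacard : (insert a t.1).card = k + 1 + 1 := by
      rw [Finset.card_insert_of_notMem hat, t.2]
    have hsbcard : (insert b t.1).card = k + 1 + 1 := by
      rw [Finset.card_insert_of_notMem hbt, t.2]
    let sa : CompleteSimplex n (k+1) := ⟨insert a t.1, hsacard⟩
    let sb : CompleteSimplex n (k+1) := ⟨insert b t.1, hsbcard⟩
    have hne : sa ≠ sb := by
      intro hh
      have : insert a t.1 = insert b t.1 := congrArg Subtype.val hh
      have : a ∈ insert b t.1 := this ▸ Finset.mem_insert_self a t.1
      exact hanotin this
    have hUsa : u.1 = insert b sa.1 := by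
      show u.1 = insert b (insert a t.1)
      rw [hu, Finset.insert_comm]
    have hUsb : u.1 = insert a sb.1 := hu
    rw [Finset.sum_eq_add_of_mem sa sb (Finset.mem_univ _) (Finset.mem_univ _) hne ?_]
    · rw [completeD_apply_insert u sa b hbnotin hUsa,
        completeD_apply_insert u sb a hanotin hUsb,
        completeD_apply_insert sa t a hat rfl,
        completeD_apply_insert sb t b hbt rfl, hu]
      exact esgn_I1 hab hat hbt
    · intro s _ hs
      by_cases h1 : t.1 ⊆ s.1
      · by_cases h2 : s.1 ⊆ u.1
        · exfalso
          obtain ⟨c, hct, hsc⟩ := exists_insert_of_subset_card h1 (by rw [s.2, t.2])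
          have hcu : c ∈ u.1 \ t.1 := Finset.mem_sdiff.mpr
            ⟨h2 (by rw [hsc]; exact Finset.mem_insert_self _ _), hct⟩
          rw [hexp] at hcu
          simp only [Finset.mem_insert, Finset.mem_singleton] at hcu
          rcases hcu with rfl | rfl
          · exact hs.1 (Subtype.ext hsc)
          · exact hs.2 (Subtype.ext hsc)
        · rw [completeD_eq_zero h2, zero_mul]
      · rw [completeD_eq_zero h1, mul_zero]
  · apply Finset.sum_eq_zero
    intro s _
    by_cases h1 : t.1 ⊆ s.1
    · by_cases h2 : s.1 ⊆ u.1
      · exact absurd (h1.trans h2) h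
      · rw [completeD_eq_zero h2, zero_mul]
    · rw [completeD_eq_zero h1, mul_zero]


lemma card_completeSimplex (n k : ℕ) :
    Fintype.card (CompleteSimplex n k) = n.choose (k+1) := by
  have : Fintype.card {s : Finset (Fin n) // s.card = k + 1}
      = (Fintype.card (Fin n)).choose (k+1) := Fintype.card_finset_len (k+1)
  rw [Fintype.card_fin] at this
  exact this

lemma trace_dirac (n k : ℕ) :
    ((completeD n k)ᵀ * completeD n k).trace
      = ((n.choose (k+1) * (n - (k+1)) : ℕ) : ℝ) := by
  unfold Matrix.trace
  have hdiag : ∀ t : CompleteSimplex n k,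
      ((completeD n k)ᵀ * completeD n k).diag t = ((n - (k+1) : ℕ) : ℝ) := by
    intro t
    simp only [Matrix.diag_apply, Matrix.mul_apply, Matrix.transpose_apply]
    rw [← card_cofaces k t.1 t.2, Finset.card_eq_sum_ones, Nat.cast_sum, Finset.sum_filter]
    congr 1
    ext s
    rw [d_sq]
    by_cases h : t.1 ⊆ s.1 <;> simp [h]
  rw [Finset.sum_congr rfl (fun t _ => hdiag t), Finset.sum_const, Finset.card_univ,
    card_completeSimplex, nsmul_eq_mul, ← Nat.cast_mul]

lemma dirac_sq (n k : ℕ) :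
    ((completeD n k)ᵀ * completeD n k) * ((completeD n k)ᵀ * completeD n k)
      = (n : ℝ) • ((completeD n k)ᵀ * completeD n k) := by
  have hL := laplacian n k
  have hdd := d_comp_d n k
  have hmid : completeD n k * (completeD n k)ᵀ
      = (n : ℝ) • (1 : Matrix (CompleteSimplex n (k+1)) (CompleteSimplex n (k+1)) ℝ)
        - (completeD n (k+1))ᵀ * completeD n (k+1) := by
    rw [← hL]; abel
  calc ((completeD n k)ᵀ * completeD n k) * ((completeD n k)ᵀ * completeD n k)
      = (completeD n k)ᵀ * (completeD n k * (completeD n k)ᵀ) * completeD n k := by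
        rw [Matrix.mul_assoc, Matrix.mul_assoc, Matrix.mul_assoc]
    _ = (completeD n k)ᵀ * ((n : ℝ) • (1 : Matrix (CompleteSimplex n (k+1)) (CompleteSimplex n (k+1)) ℝ)
          - (completeD n (k+1))ᵀ * completeD n (k+1)) * completeD n k := by rw [hmid]
    _ = (n : ℝ) • ((completeD n k)ᵀ * completeD n k)
          - ((completeD n (k+1)) * completeD n k)ᵀ * ((completeD n (k+1)) * completeD n k) := by
        rw [Matrix.mul_sub, Matrix.sub_mul, Matrix.transpose_mul]
        congr 1
        · rw [Matrix.mul_smul, Matrix.mul_one, Matrix.smul_mul]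
        · rw [Matrix.mul_assoc, Matrix.mul_assoc, Matrix.mul_assoc]
    _ = (n : ℝ) • ((completeD n k)ᵀ * completeD n k) := by
        rw [hdd, Matrix.transpose_zero, Matrix.zero_mul, sub_zero]

/-- Characteristic polynomials are invariant under conjugation. -/
lemma charpoly_conj {m : Type*} [Fintype m] [DecidableEq m] (U D V : Matrix m m ℝ)
    (hVU : V * U = 1) : (U * D * V).charpoly = D.charpoly := by
  have hUV : U * V = 1 := mul_eq_one_comm.mp hVU
  unfold Matrix.charpoly
  have hch : Matrix.charmatrix (U * D * V)
      = (Polynomial.C.mapMatrix U) * Matrix.charmatrix D * (Polynomial.C.mapMatrix V) := by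
    unfold Matrix.charmatrix
    rw [Matrix.mul_sub, Matrix.sub_mul]
    congr 1
    · rw [← (Matrix.scalar_commute Polynomial.X (Commute.all _) (Polynomial.C.mapMatrix U)).eq,
        Matrix.mul_assoc, ← _root_.map_mul, hUV, _root_.map_one, Matrix.mul_one]
    · rw [_root_.map_mul, _root_.map_mul]
  rw [hch, Matrix.det_mul, Matrix.det_mul]
  have h1 : (Polynomial.C.mapMatrix V).det * (Polynomial.C.mapMatrix U).det = 1 := by
    rw [← Matrix.det_mul, ← _root_.map_mul, hVU, _root_.map_one, Matrix.det_one]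
  linear_combination (Matrix.charmatrix D).det * h1

lemma charpoly_diagonal {m : Type*} [Fintype m] [DecidableEq m] (d : m → ℝ) :
    (Matrix.diagonal d).charpoly = ∏ i, (Polynomial.X - Polynomial.C (d i)) := by
  unfold Matrix.charpoly
  have : Matrix.charmatrix (Matrix.diagonal d)
      = Matrix.diagonal (fun i => Polynomial.X - Polynomial.C (d i)) := by
    ext i j
    by_cases h : i = j
    · subst h
      rw [Matrix.charmatrix_apply_eq, Matrix.diagonal_apply_eq, Matrix.diagonal_apply_eq]
    · rw [Matrix.charmatrix_apply_ne _ _ _ h, Matrix.diagonal_apply_ne _ h,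
        Matrix.diagonal_apply_ne _ h, map_zero, neg_zero]
  rw [this, Matrix.det_diagonal]


end CayleyAux

set_option maxHeartbeats 2000000 in
open CayleyAux Polynomial in
/-- generalized Cayley formula, Dirac blocks: for the complete
graph `K n` with `n ≥ 2`, the pseudo determinant of the `k`-th Dirac block
`D_k = d_kᵀ d_k` equals `n^{C(n-1, k+1)}` for all `k ≥ 0`. -/
theorem pseudoDet_diracBlock_completeGraph (n : ℕ) (hn : 2 ≤ n) (k : ℕ) :
    pseudoDet ((completeD n k)ᵀ * completeD n k) =
      (n : ℝ) ^ Nat.choose (n - 1) (k + 1) := by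
  classical
  set B : Matrix (CompleteSimplex n k) (CompleteSimplex n k) ℝ :=
    (completeD n k)ᵀ * completeD n k with hBdef
  have hH : B.IsHermitian := by
    rw [hBdef, ← Matrix.conjTranspose_eq_transpose_of_trivial]
    exact Matrix.isHermitian_conjTranspose_mul_self _
  have hB2 : B * B = (n : ℝ) • B := dirac_sq n k
  set m : ℕ := Fintype.card (CompleteSimplex n k) with hm
  -- each eigenvalue is 0 or n
  have heig : ∀ i, hH.eigenvalues i = 0 ∨ hH.eigenvalues i = n := by
    intro i
    set μ := hH.eigenvalues i with hμ
    have hv := hH.mulVec_eigenvectorBasis i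
    have hv0 : ⇑(hH.eigenvectorBasis i) ≠ 0 := by
      have := hH.eigenvectorBasis.toBasis.ne_zero i
      simpa using this
    have h1 : (B * B) *ᵥ ⇑(hH.eigenvectorBasis i) = (μ * μ) • ⇑(hH.eigenvectorBasis i) := by
      rw [← Matrix.mulVec_mulVec, hv, Matrix.mulVec_smul, hv, smul_smul]
    have h2 : (B * B) *ᵥ ⇑(hH.eigenvectorBasis i) = ((n : ℝ) * μ) • ⇑(hH.eigenvectorBasis i) := by
      rw [hB2, Matrix.smul_mulVec, hv, smul_smul]
    have h3 : (μ * μ - (n : ℝ) * μ) • ⇑(hH.eigenvectorBasis i) = 0 := by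
      rw [sub_smul, h1.symm.trans h2]; abel
    have h4 : μ * μ - (n : ℝ) * μ = 0 := by
      by_contra hne
      exact hv0 (by simpa [smul_eq_zero, hne] using h3)
    have h5 : μ * (μ - n) = 0 := by ring_nf; linarith [h4]
    rcases mul_eq_zero.mp h5 with h | h
    · exact Or.inl h
    · exact Or.inr (by linarith [h])
  -- spectral data
  set U : Matrix (CompleteSimplex n k) (CompleteSimplex n k) ℝ :=
    (Matrix.IsHermitian.eigenvectorUnitary hH : Matrix (CompleteSimplex n k) (CompleteSimplex n k) ℝ)
    with hU
  have hVU : star U * U = 1 := Unitary.coe_star_mul_self _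
  have hspec : B = U * Matrix.diagonal hH.eigenvalues * star U := by
    have := hH.spectral_theorem
    simpa using this
  have hcp : B.charpoly = (Matrix.diagonal hH.eigenvalues).charpoly := by
    conv_lhs => rw [hspec]
    exact charpoly_conj U _ (star U) hVU
  have htrace : B.trace = ∑ i, hH.eigenvalues i := by
    conv_lhs => rw [hspec]
    rw [Matrix.trace_mul_comm, ← Matrix.mul_assoc, hVU, Matrix.one_mul, Matrix.trace_diagonal]
  -- the number of nonzero eigenvalues
  set r : ℕ := (Finset.univ.filter (fun i => hH.eigenvalues i ≠ 0)).card with hr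
  have hrank : B.rank = r := by
    rw [hH.rank_eq_card_non_zero_eigs, Fintype.card_subtype]
  have hrm : r ≤ m := by
    rw [hr, hm, ← Finset.card_univ]
    exact Finset.card_le_card (Finset.filter_subset _ _)
  have hsum : ∑ i, hH.eigenvalues i = (n : ℝ) * r := by
    rw [← Finset.sum_filter_add_sum_filter_not Finset.univ (fun i => hH.eigenvalues i ≠ 0)]
    have hz : ∑ i ∈ Finset.univ.filter (fun i => ¬ hH.eigenvalues i ≠ 0), hH.eigenvalues i = 0 := by
      apply Finset.sum_eq_zero
      intro i hi
      simpa using (Finset.mem_filter.mp hi).2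
    have hnn : ∑ i ∈ Finset.univ.filter (fun i => hH.eigenvalues i ≠ 0), hH.eigenvalues i
        = (n : ℝ) * r := by
      rw [Finset.sum_congr rfl (fun i hi => ?_), Finset.sum_const, nsmul_eq_mul, mul_comm]
      rcases heig i with h | h
      · exact absurd h (Finset.mem_filter.mp hi).2
      · exact h
    rw [hz, hnn, add_zero]
  -- identify r
  have hn1 : 1 ≤ n := le_trans one_le_two hn
  have hid : n * (n - 1).choose (k + 1) = n.choose (k + 1) * (n - (k + 1)) := by
    have h1 := Nat.add_one_mul_choose_eq (n - 1) (k + 1)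
    rw [Nat.sub_add_cancel hn1] at h1
    have h2 := Nat.choose_succ_right_eq n (k + 1)
    rw [h1]
    exact h2
  have hrval : r = (n - 1).choose (k + 1) := by
    have hc : (n : ℝ) * r = (n : ℝ) * ((n - 1).choose (k + 1) : ℕ) := by
      rw [← hsum, ← htrace, trace_dirac n k, ← Nat.cast_mul, ← hid, Nat.cast_mul]
    have hn0 : (n : ℝ) ≠ 0 := by positivity
    exact_mod_cast mul_left_cancel₀ hn0 hc
  -- charpoly computation
  have hcp2 : B.charpoly = (X - C (n : ℝ)) ^ r * X ^ (m - r) := by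
    rw [hcp, CayleyAux.charpoly_diagonal]
    rw [← Finset.prod_filter_mul_prod_filter_not Finset.univ (fun i => hH.eigenvalues i ≠ 0)]
    congr 1
    · rw [Finset.prod_congr rfl (fun i hi => ?_), Finset.prod_const, hr]
      rcases heig i with h | h
      · exact absurd h (Finset.mem_filter.mp hi).2
      · rw [h]
    · rw [Finset.prod_congr rfl (fun i hi => ?_), Finset.prod_const]
      · congr 1
        have := Finset.card_filter_add_card_filter_not
          (s := Finset.univ) (p := fun i => hH.eigenvalues i ≠ 0)
        rw [Finset.card_univ] at this
        omega
      · have h0 : hH.eigenvalues i = 0 := by simpa using (Finset.mem_filter.mp hi).2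
        rw [h0, map_zero, sub_zero]
  -- final computation
  unfold pseudoDet
  rw [hrank, hcp2, ← hm]
  rw [Polynomial.coeff_mul_X_pow', if_pos le_rfl, Nat.sub_self]
  rw [Polynomial.coeff_zero_eq_eval_zero]
  simp only [Polynomial.eval_pow, Polynomial.eval_sub, Polynomial.eval_X, Polynomial.eval_C,
    zero_sub]
  rw [← mul_pow, neg_one_mul, neg_neg, hrval]
end

section
/- For any graph G that is the disjoint union of two graphs H and K, the squared analytic torsion is multiplicative: A(G) = A(H) · A(K). -/
open Matrix

open Polynomial

private lemma charpoly_conj_aux_s10 {m : Type*} [Fintype m] [DecidableEq m] (A U W : Matrix m m ℝ)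
    (h1 : U * W = 1) : (U * A * W).charpoly = A.charpoly := by
  have hcm : charmatrix (U * A * W) =
      (C : ℝ →+* ℝ[X]).mapMatrix U * charmatrix A * (C : ℝ →+* ℝ[X]).mapMatrix W := by
    unfold charmatrix
    rw [mul_sub, sub_mul, _root_.map_mul, _root_.map_mul]
    congr 1
    rw [← (Matrix.scalar_commute (X : ℝ[X]) (fun r => Commute.all _ _) _).eq, mul_assoc,
      ← _root_.map_mul, h1, _root_.map_one, mul_one]
  rw [Matrix.charpoly, hcm, det_mul, det_mul, mul_right_comm, ← det_mul,
    ← RingHom.map_mul, h1, RingHom.map_one, det_one, one_mul, Matrix.charpoly]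

private lemma charpoly_diagonal_real {m : Type*} [Fintype m] [DecidableEq m] (w : m → ℝ) :
    (diagonal w).charpoly = ∏ i, (X - C (w i)) := by
  have h : charmatrix (diagonal w) = diagonal (fun i => X - C (w i)) := by
    ext i j
    by_cases h : i = j
    · subst h; simp [charmatrix_apply_eq, diagonal_apply_eq]
    · simp [charmatrix_apply_ne _ _ _ h, diagonal_apply_ne _ h, diagonal_apply_ne' _ h]
  rw [Matrix.charpoly, h, det_diagonal]

private lemma sym_charpoly_coeff_eq_zero {V : Type*} [Fintype V] [DecidableEq V]
    (M : Matrix V V ℝ) (hM : M.IsHermitian) {j : ℕ}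
    (hj : j < Fintype.card V - M.rank) : M.charpoly.coeff j = 0 := by
  classical
  set U : Matrix V V ℝ := (hM.eigenvectorUnitary : Matrix V V ℝ) with hU
  have h1 : U * star U = 1 := (Matrix.mem_unitaryGroup_iff).mp hM.eigenvectorUnitary.2
  have hμ : (RCLike.ofReal ∘ hM.eigenvalues : V → ℝ) = hM.eigenvalues := by
    funext i; simp
  have hcp : M.charpoly = (diagonal hM.eigenvalues).charpoly := by
    conv_lhs => rw [hM.spectral_theorem]
    rw [hμ]
    exact charpoly_conj_aux_s10 _ _ _ h1
  have hrank : M.rank = Fintype.card {i // hM.eigenvalues i ≠ 0} :=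
    hM.rank_eq_card_non_zero_eigs
  have hzero : Fintype.card V - M.rank = Fintype.card {i // hM.eigenvalues i = 0} := by
    rw [hrank, ← Fintype.card_subtype_compl]
    exact Fintype.card_congr (Equiv.subtypeEquivRight (by intro x; tauto))
  rw [hcp, charpoly_diagonal_real]
  rw [← Finset.prod_filter_mul_prod_filter_not Finset.univ (fun i => hM.eigenvalues i = 0)]
  have hx : ∏ i ∈ Finset.univ.filter (fun i => hM.eigenvalues i = 0), (X - C (hM.eigenvalues i))
      = X ^ (Finset.univ.filter (fun i => hM.eigenvalues i = 0)).card := by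
    rw [← Finset.prod_const]
    exact Finset.prod_congr rfl (fun i hi => by
      simp only [Finset.mem_filter] at hi
      rw [hi.2, map_zero, sub_zero])
  rw [hx, mul_comm, Polynomial.coeff_mul_X_pow', if_neg]
  rw [not_le]
  calc j < Fintype.card V - M.rank := hj
    _ = (Finset.univ.filter (fun i => hM.eigenvalues i = 0)).card := by
        rw [hzero, Fintype.card_subtype]

private noncomputable def prodSubmoduleEquiv {R M N : Type*} [Ring R] [AddCommGroup M]
    [AddCommGroup N] [Module R M] [Module R N] (p : Submodule R M) (q : Submodule R N) :
    ↥(p.prod q) ≃ₗ[R] ↥p × ↥q where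
  toFun x := (⟨x.1.1, x.2.1⟩, ⟨x.1.2, x.2.2⟩)
  invFun x := ⟨(x.1.1, x.2.1), ⟨x.1.2, x.2.2⟩⟩
  map_add' _ _ := rfl
  map_smul' _ _ := rfl
  left_inv _ := rfl
  right_inv _ := rfl

private lemma range_prodMap' {R M M₂ M₃ M₄ : Type*} [Ring R] [AddCommGroup M] [AddCommGroup M₂]
    [AddCommGroup M₃] [AddCommGroup M₄] [Module R M] [Module R M₂] [Module R M₃] [Module R M₄]
    (f : M →ₗ[R] M₃) (g : M₂ →ₗ[R] M₄) :
    LinearMap.range (f.prodMap g) = (LinearMap.range f).prod (LinearMap.range g) := by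
  ext ⟨u, v⟩
  simp only [LinearMap.mem_range, Submodule.mem_prod, LinearMap.prodMap_apply, Prod.mk.injEq]
  constructor
  · rintro ⟨⟨a, b⟩, h1, h2⟩; exact ⟨⟨a, h1⟩, ⟨b, h2⟩⟩
  · rintro ⟨⟨a, h1⟩, ⟨b, h2⟩⟩; exact ⟨(a, b), h1, h2⟩

private lemma rank_fromBlocks_real {m n p q : Type*} [Fintype m] [Fintype n] [Fintype p]
    [Fintype q] [DecidableEq n] [DecidableEq q] (A : Matrix m n ℝ) (B : Matrix p q ℝ) :
    (fromBlocks A 0 0 B).rank = A.rank + B.rank := by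
  have hlin : (fromBlocks A 0 0 B).mulVecLin =
      ((LinearEquiv.sumArrowLequivProdArrow m p ℝ ℝ).symm.toLinearMap) ∘ₗ
        (A.mulVecLin.prodMap B.mulVecLin) ∘ₗ
        (LinearEquiv.sumArrowLequivProdArrow n q ℝ ℝ).toLinearMap := by
    apply LinearMap.ext
    intro x
    funext i
    simp only [mulVecLin_apply, fromBlocks_mulVec, zero_mulVec, add_zero, zero_add,
      LinearMap.comp_apply, LinearEquiv.coe_coe, LinearMap.prodMap_apply]
    cases i <;> rfl
  rw [Matrix.rank, Matrix.rank, Matrix.rank, hlin, LinearMap.range_comp,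
    LinearMap.range_comp_of_range_eq_top _ (LinearEquiv.range _), range_prodMap',
    LinearEquiv.finrank_map_eq]
  rw [← Module.finrank_prod]
  exact LinearEquiv.finrank_eq (prodSubmoduleEquiv _ _)

private lemma coeff_mul_of_trailing {p q : ℝ[X]} {a b : ℕ}
    (hp : ∀ j < a, p.coeff j = 0) (hq : ∀ j < b, q.coeff j = 0) :
    (p * q).coeff (a + b) = p.coeff a * q.coeff b := by
  rw [Polynomial.coeff_mul]
  apply Finset.sum_eq_single (a, b)
  · rintro ⟨i, j⟩ hij hne
    rw [Finset.HasAntidiagonal.mem_antidiagonal] at hij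
    simp only at hij
    rcases lt_trichotomy i a with h | h | h
    · exact mul_eq_zero_of_left (hp i h) _
    · exact absurd (by subst h; simp [show j = b by omega]) hne
    · exact mul_eq_zero_of_right _ (hq j (by omega))
  · intro h
    simp at h

private lemma herm_tmul {m n : Type*} [Fintype m] [Fintype n] (A : Matrix m n ℝ) :
    (Aᵀ * A).IsHermitian := by
  have := Matrix.isHermitian_conjTranspose_mul_self A
  simpa [Matrix.conjTranspose_eq_transpose_of_trivial] using this

private lemma pseudoDet_blocks {m n p q : Type*} [Fintype m] [Fintype n] [Fintype p] [Fintype q]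
    [DecidableEq n] [DecidableEq q] (A : Matrix m n ℝ) (B : Matrix p q ℝ) :
    pseudoDet ((fromBlocks A 0 0 B)ᵀ * fromBlocks A 0 0 B) =
      pseudoDet (Aᵀ * A) * pseudoDet (Bᵀ * B) := by
  have hGt : (fromBlocks A 0 0 B)ᵀ * fromBlocks A 0 0 B =
      fromBlocks (Aᵀ * A) 0 0 (Bᵀ * B) := by
    rw [fromBlocks_transpose, fromBlocks_multiply]
    simp
  have hrk : (fromBlocks (Aᵀ * A) 0 0 (Bᵀ * B)).rank = (Aᵀ * A).rank + (Bᵀ * B).rank :=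
    rank_fromBlocks_real _ _
  have hA1 : (Aᵀ * A).rank ≤ Fintype.card n := Matrix.rank_le_card_width _
  have hB1 : (Bᵀ * B).rank ≤ Fintype.card q := Matrix.rank_le_card_width _
  have hcard : Fintype.card (n ⊕ q) - ((Aᵀ * A).rank + (Bᵀ * B).rank) =
      (Fintype.card n - (Aᵀ * A).rank) + (Fintype.card q - (Bᵀ * B).rank) := by
    rw [Fintype.card_sum]; omega
  rw [hGt, pseudoDet, pseudoDet, pseudoDet, hrk, charpoly_fromBlocks_zero₁₂, hcard,
    coeff_mul_of_trailing (fun j hj => sym_charpoly_coeff_eq_zero _ (herm_tmul A) hj)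
      (fun j hj => sym_charpoly_coeff_eq_zero _ (herm_tmul B) hj),
    pow_add]
  ring


/-- if the graph `G` is the disjoint union of graphs `H` and `K`,
so that each exterior derivative of its Whitney complex is the direct sum
(`Matrix.fromBlocks`) of the exterior derivatives `dH k`, `dK k` of the Whitney
complexes of `H` and `K`, then the squared analytic torsion
`A = ∏_k Det(D_k)^{(-1)^k}` (with `D_k = d_kᵀ d_k`) is multiplicative:
`A(G) = A(H) · A(K)`. -/
theorem torsion_disjoint_union (r : ℕ) (f g : ℕ → ℕ)
    (dH : ∀ k : ℕ, Matrix (Fin (f (k + 1))) (Fin (f k)) ℝ)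
    (dK : ∀ k : ℕ, Matrix (Fin (g (k + 1))) (Fin (g k)) ℝ)
    (hH : ∀ k, dH (k + 1) * dH k = 0)
    (hK : ∀ k, dK (k + 1) * dK k = 0)
    (dG : ∀ k : ℕ, Matrix (Fin (f (k + 1)) ⊕ Fin (g (k + 1)))
      (Fin (f k) ⊕ Fin (g k)) ℝ)
    (hG : ∀ k, dG k = Matrix.fromBlocks (dH k) 0 0 (dK k)) :
    ∏ k ∈ Finset.range (r + 1),
        pseudoDet ((dG k)ᵀ * dG k) ^ ((-1 : ℤ) ^ k) =
      (∏ k ∈ Finset.range (r + 1),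
        pseudoDet ((dH k)ᵀ * dH k) ^ ((-1 : ℤ) ^ k)) *
      ∏ k ∈ Finset.range (r + 1),
        pseudoDet ((dK k)ᵀ * dK k) ^ ((-1 : ℤ) ^ k) := by
  rw [← Finset.prod_mul_distrib]
  apply Finset.prod_congr rfl
  intro k _
  rw [hG k, pseudoDet_blocks, mul_zpow]
end

section
/- Let D be the Dirac operator of a connected graph G on the full simplex basis, with the f_0 vertex coordinates listed first. If A is the matrix obtained from L = D^2 by deleting the row and column of one fixed vertex, then the product of the pseudo determinants of the diagonal blocks of the truncated operator satisfies: the truncated vertex block has Det equal to Det(L_0)/|V|, while all higher Dirac blocks D_k, k ≥ 1, are unchanged. Consequently SDet(D restricted) = SDet(D)/|V|. -/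
open Matrix

/-- `d` is a signed incidence matrix of the graph `G`: each row corresponds to
exactly one edge of `G`, carrying a `1` and a `-1` at its endpoints and `0`
elsewhere, and every edge of `G` corresponds to exactly one row. -/
def IsSignedIncidenceMatrix {V : Type*} {E : Type*} (G : SimpleGraph V)
    (d : Matrix E V ℝ) : Prop :=
  (∀ i : E, ∃ a b, G.Adj a b ∧ d i a = 1 ∧ d i b = -1 ∧
      ∀ v, v ≠ a → v ≠ b → d i v = 0) ∧
  (∀ a b, G.Adj a b →
      ∃! i : E, (d i a = 1 ∧ d i b = -1) ∨ (d i a = -1 ∧ d i b = 1))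

open Polynomial in
lemma ShavingAux.charpoly_conj_eq {n : Type*} [Fintype n] [DecidableEq n] {R : Type*}
    [CommRing R] (U V A : Matrix n n R) (hUV : U * V = 1) :
    (U * A * V).charpoly = A.charpoly := by
  have hmat : charmatrix (U * A * V) =
      (C : R →+* R[X]).mapMatrix U * charmatrix A * (C : R →+* R[X]).mapMatrix V := by
    simp only [charmatrix, mul_sub, sub_mul]
    congr 1
    · rw [mul_assoc, (scalar_commute (X : R[X]) (Commute.all _) _).eq, ← mul_assoc,
        ← _root_.map_mul, hUV, _root_.map_one, one_mul]
    · rw [← _root_.map_mul, ← _root_.map_mul]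
  have hdet : ((C : R →+* R[X]).mapMatrix U).det * ((C : R →+* R[X]).mapMatrix V).det = 1 := by
    rw [← det_mul, ← _root_.map_mul, hUV, _root_.map_one, det_one]
  rw [Matrix.charpoly, hmat, det_mul, det_mul, Matrix.charpoly, mul_right_comm, hdet, one_mul]

open Polynomial in
lemma ShavingAux.charpoly_diagonal {n : Type*} [Fintype n] [DecidableEq n] {R : Type*}
    [CommRing R] (v : n → R) :
    (Matrix.diagonal v).charpoly = ∏ i, (X - C (v i)) := by
  have h : charmatrix (Matrix.diagonal v) = Matrix.diagonal fun i => X - C (v i) := by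
    ext i j
    rcases eq_or_ne i j with rfl | h
    · simp
    · simp [charmatrix_apply_ne _ _ _ h, Matrix.diagonal_apply_ne _ h]
  rw [Matrix.charpoly, h, det_diagonal]

lemma ShavingAux.row_dot {V E : Type*} [Fintype V] [DecidableEq V] (d0 : Matrix E V ℝ) (i : E)
    (a b : V) (hab : a ≠ b) (ha : d0 i a = 1) (hb : d0 i b = -1)
    (h0 : ∀ v, v ≠ a → v ≠ b → d0 i v = 0) (g : V → ℝ) :
    ∑ v, d0 i v * g v = g a - g b := by
  rw [← Finset.sum_subset (Finset.subset_univ ({a, b} : Finset V))]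
  · rw [Finset.sum_pair hab, ha, hb]; ring
  · intro v _ hv
    simp only [Finset.mem_insert, Finset.mem_singleton, not_or] at hv
    rw [h0 v hv.1 hv.2, zero_mul]

lemma ShavingAux.ker_const {V E : Type*} [Fintype V] [DecidableEq V] (G : SimpleGraph V)
    (hconn : G.Connected)
    (d0 : Matrix E V ℝ) (hd0 : IsSignedIncidenceMatrix G d0)
    (x : V → ℝ) (hx : d0 *ᵥ x = 0) (u v : V) : x u = x v := by
  have hadj : ∀ a b, G.Adj a b → x a = x b := by
    intro a b hab
    obtain ⟨i, hi, -⟩ := hd0.2 a b hab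
    obtain ⟨a', b', hab', ha', hb', h0'⟩ := hd0.1 i
    have h : ∑ w, d0 i w * x w = 0 := by
      have := congrFun hx i
      simpa [Matrix.mulVec, dotProduct] using this
    rw [ShavingAux.row_dot d0 i a' b' hab'.ne ha' hb' h0'] at h
    have hiden : (a = a' ∧ b = b') ∨ (a = b' ∧ b = a') := by
      rcases hi with ⟨h1, h2⟩ | ⟨h1, h2⟩
      · left
        constructor
        · by_contra hne
          rcases eq_or_ne a b' with rfl | hne2
          · rw [hb'] at h1; norm_num at h1
          · rw [h0' a hne hne2] at h1; norm_num at h1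
        · by_contra hne
          rcases eq_or_ne b a' with rfl | hne2
          · rw [ha'] at h2; norm_num at h2
          · rw [h0' b hne2 hne] at h2; norm_num at h2
      · right
        constructor
        · by_contra hne
          rcases eq_or_ne a a' with rfl | hne2
          · rw [ha'] at h1; norm_num at h1
          · rw [h0' a hne2 hne] at h1; norm_num at h1
        · by_contra hne
          rcases eq_or_ne b b' with rfl | hne2
          · rw [hb'] at h2; norm_num at h2
          · rw [h0' b hne hne2] at h2; norm_num at h2
    have hx' : x a' = x b' := by linarith
    rcases hiden with ⟨rfl, rfl⟩ | ⟨rfl, rfl⟩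
    · exact hx'
    · exact hx'.symm
  obtain ⟨w⟩ := hconn u v
  induction w with
  | nil => rfl
  | cons h p ih => exact (hadj _ _ h).trans ih

lemma ShavingAux.d0_mulVec_one {V E : Type*} [Fintype V] [DecidableEq V] (G : SimpleGraph V)
    (d0 : Matrix E V ℝ) (hd0 : IsSignedIncidenceMatrix G d0) :
    d0 *ᵥ (fun _ => (1 : ℝ)) = 0 := by
  funext i
  obtain ⟨a, b, hab, ha, hb, h0⟩ := hd0.1 i
  have := ShavingAux.row_dot d0 i a b hab.ne ha hb h0 (fun _ => (1 : ℝ))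
  simpa [Matrix.mulVec, dotProduct] using this

open Polynomial in
lemma ShavingAux.cofactor_eq {m : ℕ} {E : Type*} [Fintype E] (G : SimpleGraph (Fin (m + 1)))
    (hconn : G.Connected) (d0 : Matrix E (Fin (m + 1)) ℝ)
    (hd0 : IsSignedIncidenceMatrix G d0) (i : Fin (m + 1)) :
    Matrix.det ((d0ᵀ * d0).submatrix i.succAbove i.succAbove) =
      pseudoDet (d0ᵀ * d0) / (m + 1 : ℝ) := by
  have hL : (d0ᵀ * d0).IsHermitian := by
    have h := Matrix.isHermitian_conjTranspose_mul_self d0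
    rwa [conjTranspose_eq_transpose_of_trivial] at h
  -- kernel of d0 is spanned by the constant vector
  have hker : LinearMap.ker d0.mulVecLin
      = (ℝ ∙ (fun _ => (1 : ℝ)) : Submodule ℝ (Fin (m + 1) → ℝ)) := by
    apply le_antisymm
    · intro x hx
      rw [LinearMap.mem_ker, mulVecLin_apply] at hx
      have hc := ShavingAux.ker_const G hconn d0 hd0 x hx
      rw [Submodule.mem_span_singleton]
      exact ⟨x 0, funext fun v => by simp [hc 0 v]⟩
    · rw [Submodule.span_singleton_le_iff_mem, LinearMap.mem_ker, mulVecLin_apply]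
      exact ShavingAux.d0_mulVec_one G d0 hd0
  have hrank : (d0ᵀ * d0).rank = m := by
    rw [Matrix.rank_transpose_mul_self]
    have h1 : d0.rank + Module.finrank ℝ (LinearMap.ker d0.mulVecLin) = m + 1 := by
      rw [Matrix.rank, LinearMap.finrank_range_add_finrank_ker]
      simp [Module.finrank_fintype_fun_eq_card]
    have h2 : Module.finrank ℝ (LinearMap.ker d0.mulVecLin) = 1 := by
      rw [hker]
      apply finrank_span_singleton
      intro h
      have := congrFun h 0
      norm_num at this
    omega
  -- a zero eigenvalue
  obtain ⟨i0, hi0⟩ : ∃ i0 : Fin (m + 1), hL.eigenvalues i0 = 0 := by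
    have hcard : Fintype.card {j // hL.eigenvalues j ≠ 0} = m := by
      rw [← hL.rank_eq_card_non_zero_eigs, hrank]
    have h1 : Fintype.card {j // ¬ (hL.eigenvalues j ≠ 0)} = 1 := by
      rw [Fintype.card_subtype_compl, hcard, Fintype.card_fin]
      omega
    obtain ⟨a, -⟩ := Fintype.card_eq_one_iff.mp h1
    exact ⟨a.1, not_ne_iff.mp a.2⟩
  set μ := hL.eigenvalues with hμ
  -- characteristic polynomial via spectral theorem
  have hUV : (hL.eigenvectorUnitary : Matrix (Fin (m + 1)) (Fin (m + 1)) ℝ) *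
      star (hL.eigenvectorUnitary : Matrix (Fin (m + 1)) (Fin (m + 1)) ℝ) = 1 :=
    mem_unitaryGroup_iff.mp hL.eigenvectorUnitary.2
  have hVU : star (hL.eigenvectorUnitary : Matrix (Fin (m + 1)) (Fin (m + 1)) ℝ) *
      (hL.eigenvectorUnitary : Matrix (Fin (m + 1)) (Fin (m + 1)) ℝ) = 1 :=
    mem_unitaryGroup_iff'.mp hL.eigenvectorUnitary.2
  have hdiag : (RCLike.ofReal ∘ μ : Fin (m + 1) → ℝ) = μ := by funext j; simp
  have hcp : (d0ᵀ * d0).charpoly = ∏ j, (X - C (μ j)) := by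
    conv_lhs => rw [hL.spectral_theorem, Unitary.conjStarAlgAut_apply]
    rw [ShavingAux.charpoly_conj_eq _ _ _ hUV, hdiag, ShavingAux.charpoly_diagonal]
  set P : ℝ := ∏ j ∈ Finset.univ.erase i0, μ j with hP
  have hcoeff : (d0ᵀ * d0).charpoly.coeff 1 = (-1 : ℝ) ^ m * P := by
    rw [hcp, ← Finset.mul_prod_erase _ _ (Finset.mem_univ i0), hi0, map_zero, sub_zero,
      show (X * ∏ x ∈ Finset.univ.erase i0, (X - C (μ x))).coeff 1
        = (∏ x ∈ Finset.univ.erase i0, (X - C (μ x))).coeff 0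
        from Polynomial.coeff_X_mul _ 0,
      Polynomial.coeff_zero_eq_eval_zero, Polynomial.eval_prod]
    simp only [Polynomial.eval_sub, Polynomial.eval_X, Polynomial.eval_C, zero_sub]
    rw [Finset.prod_congr rfl (fun j _ => neg_eq_neg_one_mul (μ j)), Finset.prod_mul_distrib,
      Finset.prod_const, Finset.card_erase_of_mem (Finset.mem_univ i0), Finset.card_univ,
      Fintype.card_fin, Nat.add_sub_cancel, hP]
  have hpd : pseudoDet (d0ᵀ * d0) = P := by
    rw [pseudoDet, hrank, Fintype.card_fin, show m + 1 - m = 1 from by omega, hcoeff,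
      ← mul_assoc, ← pow_add]
    rw [Even.neg_one_pow ⟨m, rfl⟩, one_mul]
  have hdet0 : (d0ᵀ * d0).det = 0 := by
    rw [hL.det_eq_prod_eigenvalues]
    exact Finset.prod_eq_zero (Finset.mem_univ i0) (by simpa using hi0)
  -- trace of the adjugate
  have htr : (adjugate (d0ᵀ * d0)).trace = P := by
    conv_lhs => rw [hL.spectral_theorem, Unitary.conjStarAlgAut_apply]
    rw [adjugate_mul_distrib, adjugate_mul_distrib, trace_mul_comm, mul_assoc,
      ← adjugate_mul_distrib, hVU, adjugate_one, mul_one, hdiag, adjugate_diagonal,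
      trace_diagonal]
    rw [Finset.sum_eq_single i0 (fun b _ hb =>
      Finset.prod_eq_zero (Finset.mem_erase.mpr ⟨fun hc => hb hc.symm, Finset.mem_univ i0⟩) hi0)
      (fun h => absurd (Finset.mem_univ i0) h), hP]
  -- all entries of the adjugate are equal
  have hmul : (d0ᵀ * d0) * adjugate (d0ᵀ * d0) = 0 := by
    rw [mul_adjugate, hdet0, zero_smul]
  have hcols : ∀ j u v, adjugate (d0ᵀ * d0) u j = adjugate (d0ᵀ * d0) v j := by
    intro j u v
    have hker1 : (d0ᵀ * d0) *ᵥ (fun k => adjugate (d0ᵀ * d0) k j) = 0 := by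
      funext u'
      have h2 : ((d0ᵀ * d0) * adjugate (d0ᵀ * d0)) u' j = (0 : Matrix _ _ ℝ) u' j := by
        rw [hmul]
      simpa [Matrix.mul_apply, Matrix.mulVec, dotProduct] using h2
    have hmem : (fun k => adjugate (d0ᵀ * d0) k j)
        ∈ LinearMap.ker (d0ᵀ * d0).mulVecLin := by
      rw [LinearMap.mem_ker, mulVecLin_apply]; exact hker1
    rw [Matrix.ker_mulVecLin_transpose_mul_self, LinearMap.mem_ker, mulVecLin_apply] at hmem
    exact ShavingAux.ker_const G hconn d0 hd0 _ hmem u v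
  have hsym : ∀ u v, adjugate (d0ᵀ * d0) u v = adjugate (d0ᵀ * d0) v u := by
    intro u v
    have h := hL.adjugate.apply u v
    simpa using h.symm
  have hconst : ∀ u v, adjugate (d0ᵀ * d0) u v = adjugate (d0ᵀ * d0) 0 0 := by
    intro u v
    rw [hcols v u 0, hsym 0 v, hcols 0 v 0]
  have htr2 : (adjugate (d0ᵀ * d0)).trace = (m + 1 : ℝ) * adjugate (d0ᵀ * d0) 0 0 := by
    rw [Matrix.trace]
    calc ∑ k, (adjugate (d0ᵀ * d0)).diag k
        = ∑ _k : Fin (m + 1), adjugate (d0ᵀ * d0) 0 0 :=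
          Finset.sum_congr rfl fun k _ => hconst k k
      _ = (m + 1 : ℝ) * adjugate (d0ᵀ * d0) 0 0 := by
          rw [Finset.sum_const, Finset.card_univ, Fintype.card_fin, nsmul_eq_mul]
          push_cast; ring
  have hsub : Matrix.det ((d0ᵀ * d0).submatrix i.succAbove i.succAbove)
      = adjugate (d0ᵀ * d0) i i := by
    rw [adjugate_fin_succ_eq_det_submatrix, Even.neg_one_pow ⟨(i : ℕ), rfl⟩, one_mul]
  have hP1 : P = (m + 1 : ℝ) * adjugate (d0ᵀ * d0) 0 0 := by rw [← htr, htr2]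
  rw [hsub, hconst i i, hpd, hP1, mul_div_cancel_left₀]
  positivity

/-- shaving off one vertex: let `G` be a connected graph on the
vertices `Fin (m+1)`, whose Whitney complex has exterior derivatives
`d0 : 0-forms → 1-forms` (a signed incidence matrix of `G`) and
`d (k) : (k+1)-forms → (k+2)-forms`.  Deleting the row and the column of one
fixed vertex `i` from the Kirchhoff block `L₀ = d0ᵀ d0` produces a truncated
block whose (ordinary) determinant equals `Det(L₀)/|V|`, while all higher Dirac
blocks `D_k = d_kᵀ d_k`, `k ≥ 1`, are unchanged; consequently the super pseudo
determinant of the truncated Dirac operator equals `SDet(D)/|V|`. -/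
theorem shaving_dirac (m : ℕ) (r : ℕ) (f : ℕ → ℕ)
    (G : SimpleGraph (Fin (m + 1))) (hconn : G.Connected)
    (d0 : Matrix (Fin (f 1)) (Fin (m + 1)) ℝ)
    (hd0 : IsSignedIncidenceMatrix G d0)
    (d : ∀ k : ℕ, Matrix (Fin (f (k + 2))) (Fin (f (k + 1))) ℝ)
    (hchain0 : d 0 * d0 = 0)
    (hchain : ∀ k, d (k + 1) * d k = 0)
    (i : Fin (m + 1)) :
    Matrix.det ((d0ᵀ * d0).submatrix i.succAbove i.succAbove) =
      pseudoDet (d0ᵀ * d0) / (m + 1 : ℝ) ∧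
    Matrix.det ((d0ᵀ * d0).submatrix i.succAbove i.succAbove) *
        ∏ k ∈ Finset.range (r + 1),
          pseudoDet ((d k)ᵀ * d k) ^ ((-1 : ℤ) ^ (k + 1)) =
      (pseudoDet (d0ᵀ * d0) *
        ∏ k ∈ Finset.range (r + 1),
          pseudoDet ((d k)ᵀ * d k) ^ ((-1 : ℤ) ^ (k + 1))) / (m + 1 : ℝ) := by
  have main := ShavingAux.cofactor_eq G hconn d0 hd0 i
  exact ⟨main, by rw [main, div_mul_eq_mul_div]⟩
end
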